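/- arXiv:quant-ph/0506229 — 8 statements merged into one kernel-verified Lean document; each statement's English description precedes it below -/
import Mathlib

section
/- Let d ≥ 1 and let (M_j)_{j ∈ J} be a finite family of d×d complex matrices such that ∑_{j ∈ J} M_jᴴ M_j ≤ 1 in the Loewner order (i.e. 1 − ∑_j M_jᴴ M_j is positive semidefinite, where M_jᴴ denotes the conjugate transpose and 1 the identity matrix). Then ∑_{j ∈ J} |det M_j|^{2/d} ≤ 1. -/
open scoped BigOperators Matrix ComplexOrder

open Matrix in
lemma trace_eq_sum_eigenvalues' {n : Type*} [Fintype n] [DecidableEq n]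
    {A : Matrix n n ℂ} (hA : A.IsHermitian) :
    A.trace = ((∑ i, hA.eigenvalues i : ℝ) : ℂ) := by
  conv_lhs => rw [hA.spectral_theorem]
  rw [Unitary.conjStarAlgAut_apply, trace_mul_comm, ← mul_assoc]
  rw [(Matrix.mem_unitaryGroup_iff').mp (hA.eigenvectorUnitary).2, one_mul, trace_diagonal]
  push_cast
  rfl

/-- **Kraus operator inequality.** If a finite family of `d × d` complex matrices `M j`
satisfies `∑ j, (M j)ᴴ * M j ≤ 1` in the Loewner order (i.e. `1 - ∑ j, (M j)ᴴ * M j` is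
positive semidefinite), then `∑ j, |det (M j)| ^ (2 / d) ≤ 1`. -/
theorem sum_abs_det_rpow_le_one
    (d : ℕ) (hd : 1 ≤ d) (J : Type*) [Fintype J]
    (M : J → Matrix (Fin d) (Fin d) ℂ)
    (h : ((1 : Matrix (Fin d) (Fin d) ℂ) - ∑ j, (M j)ᴴ * M j).PosSemidef) :
    ∑ j, ‖(M j).det‖ ^ ((2 : ℝ) / d) ≤ 1 := by
  classical
  have hd0 : (0 : ℝ) < d := by exact_mod_cast hd
  have hA : ∀ j, ((M j)ᴴ * (M j)).PosSemidef := fun j =>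
    Matrix.posSemidef_conjTranspose_mul_self _
  set ev : J → Fin d → ℝ := fun j => ((hA j).1).eigenvalues with hev
  have hev0 : ∀ j i, 0 ≤ ev j i := fun j i => (hA j).eigenvalues_nonneg i
  -- |det (M j)|² = ∏ eigenvalues
  have hdet : ∀ j, (‖(M j).det‖) ^ (2:ℕ) = ∏ i, ev j i := by
    intro j
    have h1 : ((M j)ᴴ * M j).det = ((∏ i, ev j i : ℝ) : ℂ) := by
      rw [((hA j).1).det_eq_prod_eigenvalues]; push_cast; rfl
    have h2 : ((M j)ᴴ * M j).det = ((‖(M j).det‖ ^ (2:ℕ) : ℝ) : ℂ) := by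
      rw [Matrix.det_mul, Matrix.det_conjTranspose, Complex.sq_norm,
        Complex.normSq_eq_conj_mul_self]
      simp [Complex.star_def]
    exact_mod_cast h2.symm.trans h1
  -- per-j AM-GM bound
  have key : ∀ j, ‖(M j).det‖ ^ ((2:ℝ)/d) ≤ ∑ i, (1/(d:ℝ)) * ev j i := by
    intro j
    have habs : (0:ℝ) ≤ ‖(M j).det‖ := norm_nonneg _
    have e1 : ‖(M j).det‖ ^ ((2:ℝ)/d)
        = (∏ i, ev j i) ^ ((1:ℝ)/d) := by
      rw [← hdet j, ← Real.rpow_natCast (‖(M j).det‖) 2,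
        ← Real.rpow_mul habs]
      congr 1
      push_cast
      ring
    rw [e1]
    have := Real.geom_mean_le_arith_mean_weighted Finset.univ
      (fun _ : Fin d => 1/(d:ℝ)) (ev j)
      (fun i _ => by positivity)
      (by simp [Finset.card_univ]; field_simp)
      (fun i _ => hev0 j i)
    calc (∏ i, ev j i) ^ ((1:ℝ)/d)
        = ∏ i, ev j i ^ ((1:ℝ)/d) := by
          rw [← Real.finset_prod_rpow _ _ (fun i _ => hev0 j i)]
      _ ≤ ∑ i, (1/(d:ℝ)) * ev j i := this
  -- trace bound : ∑ j ∑ i ev j i ≤ d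
  have htr : ∑ j, ∑ i, ev j i ≤ (d : ℝ) := by
    set ev' : Fin d → ℝ := fun i => h.1.eigenvalues i with hev'
    have hev'0 : ∀ i, 0 ≤ ev' i := fun i => h.eigenvalues_nonneg i
    have t1 : ((1 : Matrix (Fin d) (Fin d) ℂ) - ∑ j, (M j)ᴴ * M j).trace
        = ((∑ i, ev' i : ℝ) : ℂ) := trace_eq_sum_eigenvalues' h.1
    have t2 : (∑ j, (M j)ᴴ * M j).trace = ((∑ j, ∑ i, ev j i : ℝ) : ℂ) := by
      rw [Matrix.trace_sum,
        show ((∑ j, ∑ i, ev j i : ℝ) : ℂ) = ∑ j, ((∑ i, ev j i : ℝ) : ℂ) by push_cast; rfl]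
      exact Finset.sum_congr rfl fun j _ => trace_eq_sum_eigenvalues' ((hA j).1)
    have t3 : ((d : ℝ) : ℂ) - ((∑ j, ∑ i, ev j i : ℝ) : ℂ) = ((∑ i, ev' i : ℝ) : ℂ) := by
      rw [← t2, ← t1, Matrix.trace_sub, Matrix.trace_one]
      norm_num
    have t4 : (d : ℝ) - (∑ j, ∑ i, ev j i) = ∑ i, ev' i := by
      exact_mod_cast t3
    have : 0 ≤ ∑ i, ev' i := Finset.sum_nonneg fun i _ => hev'0 i
    linarith
  calc ∑ j, ‖(M j).det‖ ^ ((2:ℝ)/d)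
      ≤ ∑ j, ∑ i, (1/(d:ℝ)) * ev j i := Finset.sum_le_sum fun j _ => key j
    _ = (1/(d:ℝ)) * ∑ j, ∑ i, ev j i := by rw [Finset.mul_sum]; congr 1; ext j; rw [Finset.mul_sum]
    _ ≤ (1/(d:ℝ)) * d := by
        apply mul_le_mul_of_nonneg_left htr (by positivity)
    _ = 1 := by field_simp
end

section
/- Let d ≥ 1, let n ≤ m, let U be an m×m complex unitary matrix, and let λ_1, …, λ_n be nonnegative reals. Then ∑_{l=1}^{m} | ∑_{k=1}^{n} (U_{lk})^d · λ_k |^{2/d} ≤ ∑_{k=1}^{n} λ_k^{2/d}. -/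
open scoped BigOperators Matrix

lemma real_rpow_add_le_add_rpow (a b : ℝ) (ha : 0 ≤ a) (hb : 0 ≤ b) {p : ℝ}
    (hp : 0 ≤ p) (hp1 : p ≤ 1) : (a + b) ^ p ≤ a ^ p + b ^ p := by
  lift a to NNReal using ha
  lift b to NNReal using hb
  have := NNReal.rpow_add_le_add_rpow a b hp hp1
  exact_mod_cast this

lemma real_rpow_sum_le_sum_rpow {ι : Type*} (s : Finset ι) (f : ι → ℝ)
    (hf : ∀ i ∈ s, 0 ≤ f i) {p : ℝ} (hp : 0 < p) (hp1 : p ≤ 1) :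
    (∑ i ∈ s, f i) ^ p ≤ ∑ i ∈ s, f i ^ p := by
  classical
  induction s using Finset.cons_induction with
  | empty => simp [Real.zero_rpow hp.ne']
  | cons a s ha ih =>
    rw [Finset.sum_cons, Finset.sum_cons]
    have h1 : (f a + ∑ i ∈ s, f i) ^ p ≤ f a ^ p + (∑ i ∈ s, f i) ^ p :=
      real_rpow_add_le_add_rpow _ _ (hf a (Finset.mem_cons_self a s))
        (Finset.sum_nonneg fun i hi => hf i (Finset.mem_cons_of_mem hi)) hp.le hp1
    exact h1.trans (by
      gcongr
      exact ih fun i hi => hf i (Finset.mem_cons_of_mem hi))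

/-- **Upper bound of Theorem 4.** For an `m × m` unitary `U`, `n ≤ m` and nonnegative
reals `λ₁, …, λ_n`, one has `∑_l |∑_k (U_{lk})^d λ_k|^{2/d} ≤ ∑_k λ_k^{2/d}`. -/
theorem sum_abs_rpow_le_of_unitary
    (d m n : ℕ) (hd : 1 ≤ d) (hnm : n ≤ m)
    (U : Matrix (Fin m) (Fin m) ℂ) (hU : U ∈ Matrix.unitaryGroup (Fin m) ℂ)
    (lam : Fin n → ℝ) (hlam : ∀ k, 0 ≤ lam k) :
    ∑ l : Fin m,
        ‖∑ k : Fin n, (U l (Fin.castLE hnm k)) ^ d * (lam k : ℂ)‖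
          ^ ((2 : ℝ) / d)
      ≤ ∑ k : Fin n, lam k ^ ((2 : ℝ) / d) := by
  classical
  have hU' : star U * U = 1 := Matrix.mem_unitaryGroup_iff'.mp hU
  have key : ∀ j k : Fin m,
      ∑ l : Fin m, (starRingEnd ℂ) (U l j) * U l k = if j = k then 1 else 0 := by
    intro j k
    have := congrFun (congrFun hU' j) k
    simpa [Matrix.mul_apply, Matrix.one_apply] using this
  have colnorm : ∀ k : Fin m, ∑ l : Fin m, ‖U l k‖ ^ 2 = 1 := by
    intro k
    have h : (∑ l : Fin m, (starRingEnd ℂ) (U l k) * U l k : ℂ) = 1 := by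
      simpa using key k k
    have : ∑ l : Fin m, ((starRingEnd ℂ) (U l k) * U l k).re = 1 := by
      rw [← Complex.re_sum, h, Complex.one_re]
    calc ∑ l : Fin m, ‖U l k‖ ^ 2
        = ∑ l : Fin m, ((starRingEnd ℂ) (U l k) * U l k).re := by
          refine Finset.sum_congr rfl fun l _ => ?_
          rw [mul_comm, Complex.mul_conj, Complex.ofReal_re, Complex.sq_norm]
      _ = 1 := this
  rcases eq_or_lt_of_le hd with h1 | h2
  · -- d = 1
    subst h1
    simp only [pow_one, Nat.cast_one, div_one]
    have habs : ∀ x : ℝ, 0 ≤ x → x ^ (2 : ℝ) = x ^ 2 := fun x hx => by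
      rw [← Real.rpow_natCast x 2]; norm_num
    refine le_of_eq ?_
    have hnn : ∀ l : Fin m,
        (0 : ℝ) ≤ ‖∑ k : Fin n, U l (Fin.castLE hnm k) * (lam k : ℂ)‖ :=
      fun l => norm_nonneg _
    calc ∑ l : Fin m,
          ‖∑ k : Fin n, U l (Fin.castLE hnm k) * (lam k : ℂ)‖ ^ (2 : ℝ)
        = ∑ l : Fin m,
            Complex.normSq (∑ k : Fin n, U l (Fin.castLE hnm k) * (lam k : ℂ)) := by
          refine Finset.sum_congr rfl fun l _ => ?_
          rw [habs _ (hnn l), Complex.sq_norm]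
      _ = ∑ k : Fin n, lam k ^ 2 := by
          have expand : ∑ l : Fin m,
              ((∑ k : Fin n, U l (Fin.castLE hnm k) * (lam k : ℂ)) *
                (starRingEnd ℂ) (∑ k : Fin n, U l (Fin.castLE hnm k) * (lam k : ℂ)))
              = ∑ k : Fin n, ((lam k : ℂ)) ^ 2 := by
            have step1 : ∀ l : Fin m,
                (∑ k : Fin n, U l (Fin.castLE hnm k) * (lam k : ℂ)) *
                  (starRingEnd ℂ) (∑ k : Fin n, U l (Fin.castLE hnm k) * (lam k : ℂ))
                = ∑ k : Fin n, ∑ j : Fin n,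
                    ((lam k : ℂ) * (lam j : ℂ)) *
                      ((starRingEnd ℂ) (U l (Fin.castLE hnm j)) * U l (Fin.castLE hnm k)) := by
              intro l
              rw [map_sum, Finset.sum_mul_sum]
              refine Finset.sum_congr rfl fun k _ => Finset.sum_congr rfl fun j _ => ?_
              rw [map_mul]
              have : (starRingEnd ℂ) ((lam j : ℂ)) = (lam j : ℂ) := Complex.conj_ofReal _
              rw [this]; ring
            calc ∑ l : Fin m,
                ((∑ k : Fin n, U l (Fin.castLE hnm k) * (lam k : ℂ)) *
                  (starRingEnd ℂ) (∑ k : Fin n, U l (Fin.castLE hnm k) * (lam k : ℂ)))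
                = ∑ l : Fin m, ∑ k : Fin n, ∑ j : Fin n,
                    ((lam k : ℂ) * (lam j : ℂ)) *
                      ((starRingEnd ℂ) (U l (Fin.castLE hnm j)) * U l (Fin.castLE hnm k)) :=
                  Finset.sum_congr rfl fun l _ => step1 l
              _ = ∑ k : Fin n, ∑ j : Fin n,
                    ((lam k : ℂ) * (lam j : ℂ)) *
                      ∑ l : Fin m,
                        (starRingEnd ℂ) (U l (Fin.castLE hnm j)) * U l (Fin.castLE hnm k) := by
                  rw [Finset.sum_comm]
                  refine Finset.sum_congr rfl fun k _ => ?_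
                  rw [Finset.sum_comm]
                  refine Finset.sum_congr rfl fun j _ => ?_
                  rw [Finset.mul_sum]
              _ = ∑ k : Fin n, ∑ j : Fin n,
                    ((lam k : ℂ) * (lam j : ℂ)) * (if j = k then 1 else 0) := by
                  refine Finset.sum_congr rfl fun k _ => Finset.sum_congr rfl fun j _ => ?_
                  rw [key]
                  congr 1
                  simp [Fin.castLE_inj]
              _ = ∑ k : Fin n, ((lam k : ℂ)) ^ 2 := by
                  refine Finset.sum_congr rfl fun k _ => ?_
                  simp [mul_ite, sq]
          have := congrArg Complex.re expand
          rw [Complex.re_sum, Complex.re_sum] at this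
          calc ∑ l : Fin m,
              Complex.normSq (∑ k : Fin n, U l (Fin.castLE hnm k) * (lam k : ℂ))
              = ∑ l : Fin m,
                  ((∑ k : Fin n, U l (Fin.castLE hnm k) * (lam k : ℂ)) *
                    (starRingEnd ℂ) (∑ k : Fin n, U l (Fin.castLE hnm k) * (lam k : ℂ))).re := by
                refine Finset.sum_congr rfl fun l _ => ?_
                rw [Complex.mul_conj, Complex.ofReal_re]
            _ = ∑ k : Fin n, (((lam k : ℂ)) ^ 2).re := this
            _ = ∑ k : Fin n, lam k ^ 2 := by
                refine Finset.sum_congr rfl fun k _ => ?_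
                rw [← Complex.ofReal_pow, Complex.ofReal_re]
      _ = ∑ k : Fin n, lam k ^ (2 : ℝ) :=
          Finset.sum_congr rfl fun k _ => (habs _ (hlam k)).symm
  · -- 2 ≤ d
    have hd2 : (2 : ℕ) ≤ d := h2
    have hdpos : (0 : ℝ) < d := by positivity
    set p : ℝ := 2 / d with hp_def
    have hp0 : 0 < p := by positivity
    have hp1 : p ≤ 1 := by
      rw [hp_def, div_le_one hdpos]
      exact_mod_cast hd2
    have step : ∀ l : Fin m,
        ‖∑ k : Fin n, (U l (Fin.castLE hnm k)) ^ d * (lam k : ℂ)‖ ^ p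
          ≤ ∑ k : Fin n, ‖U l (Fin.castLE hnm k)‖ ^ 2 * lam k ^ p := by
      intro l
      have tri : ‖∑ k : Fin n, (U l (Fin.castLE hnm k)) ^ d * (lam k : ℂ)‖
          ≤ ∑ k : Fin n, ‖U l (Fin.castLE hnm k)‖ ^ d * lam k := by
        refine (norm_sum_le _ _).trans_eq ?_
        refine Finset.sum_congr rfl fun k _ => ?_
        rw [norm_mul, norm_pow, Complex.norm_of_nonneg (hlam k)]
      have h1 : ‖∑ k : Fin n, (U l (Fin.castLE hnm k)) ^ d * (lam k : ℂ)‖ ^ p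
          ≤ (∑ k : Fin n, ‖U l (Fin.castLE hnm k)‖ ^ d * lam k) ^ p :=
        Real.rpow_le_rpow (norm_nonneg _) tri hp0.le
      have h2' : (∑ k : Fin n, ‖U l (Fin.castLE hnm k)‖ ^ d * lam k) ^ p
          ≤ ∑ k : Fin n, (‖U l (Fin.castLE hnm k)‖ ^ d * lam k) ^ p :=
        real_rpow_sum_le_sum_rpow _ _
          (fun k _ => mul_nonneg (pow_nonneg (norm_nonneg _) _) (hlam k)) hp0 hp1
      have h3 : ∀ k : Fin n,
          (‖U l (Fin.castLE hnm k)‖ ^ d * lam k) ^ p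
            = ‖U l (Fin.castLE hnm k)‖ ^ 2 * lam k ^ p := by
        intro k
        rw [Real.mul_rpow (pow_nonneg (norm_nonneg _) _) (hlam k)]
        congr 1
        rw [← Real.rpow_natCast (‖U l (Fin.castLE hnm k)‖) d,
          ← Real.rpow_mul (norm_nonneg _)]
        have : (d : ℝ) * p = 2 := by
          rw [hp_def]; field_simp
        rw [this]
        rw [← Real.rpow_natCast (‖U l (Fin.castLE hnm k)‖) 2]
        norm_num
      calc ‖∑ k : Fin n, (U l (Fin.castLE hnm k)) ^ d * (lam k : ℂ)‖ ^ p
          ≤ ∑ k : Fin n, (‖U l (Fin.castLE hnm k)‖ ^ d * lam k) ^ p :=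
            h1.trans h2'
        _ = ∑ k : Fin n, ‖U l (Fin.castLE hnm k)‖ ^ 2 * lam k ^ p :=
            Finset.sum_congr rfl fun k _ => h3 k
    calc ∑ l : Fin m,
        ‖∑ k : Fin n, (U l (Fin.castLE hnm k)) ^ d * (lam k : ℂ)‖ ^ p
        ≤ ∑ l : Fin m, ∑ k : Fin n,
            ‖U l (Fin.castLE hnm k)‖ ^ 2 * lam k ^ p :=
          Finset.sum_le_sum fun l _ => step l
      _ = ∑ k : Fin n, (∑ l : Fin m, ‖U l (Fin.castLE hnm k)‖ ^ 2) * lam k ^ p := by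
          rw [Finset.sum_comm]
          exact Finset.sum_congr rfl fun k _ => (Finset.sum_mul _ _ _).symm
      _ = ∑ k : Fin n, lam k ^ p := by
          refine Finset.sum_congr rfl fun k _ => ?_
          rw [colnorm, one_mul]
end

section
/- Fix d ≥ 1 and m ≥ 1. Let a^{(1)}, …, a^{(m)} be d×d complex matrices whose τ-tensor is diagonal with diagonal entries λ_1, …, λ_m (i.e. τ^{a}_{k_1…k_d} = 0 unless k_1 = ⋯ = k_d, and τ^{a}_{k…k} = λ_k). Let U be an m×m complex unitary matrix and set b^{(l)} = ∑_{k=1}^{m} U_{lk} a^{(k)}. Then for every l, det(b^{(l)}) = d^{−d/2} · ∑_{k=1}^{m} (U_{lk})^d λ_k, and hence the G-concurrence of the sub-normalized state with coefficient matrix b^{(l)} equals d·|det b^{(l)}|^{2/d} = | ∑_{k=1}^{m} (U_{lk})^d λ_k |^{2/d}. -/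
open scoped BigOperators Matrix

/-- The τ-tensor of a family `a : Fin m → Matrix (Fin d) (Fin d) ℂ`:
`τ^a_{k₁…k_d} = (d^{d/2} / d!) ∑_{σ ∈ S_d} det (M(σ))`, where the `i`-th row of `M(σ)`
is the `i`-th row of `a (k (σ i))`. -/
noncomputable def tauTensor (d m : ℕ) (a : Fin m → Matrix (Fin d) (Fin d) ℂ)
    (k : Fin d → Fin m) : ℂ :=
  (((Real.sqrt d ^ d / d.factorial : ℝ)) : ℂ) *
    ∑ σ : Equiv.Perm (Fin d), (Matrix.of fun i j => a (k (σ i)) i j).det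

/-- **Determinants in a decomposition arising from a diagonal τ-tensor.** If the τ-tensor
of the family `a` is diagonal with diagonal entries `λ_k`, and `b l = ∑ k, U l k • a k`
for a unitary `U`, then `det (b l) = d^{-d/2} ∑_k (U_{lk})^d λ_k`; hence the G-concurrence
of the sub-normalized state with coefficient matrix `b l` is
`d |det (b l)|^{2/d} = |∑_k (U_{lk})^d λ_k|^{2/d}`. -/
theorem det_of_diagonal_tauTensor_decomposition
    (d m : ℕ) (hd : 1 ≤ d) (hm : 1 ≤ m)
    (a : Fin m → Matrix (Fin d) (Fin d) ℂ) (lam : Fin m → ℂ)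
    (hdiag : ∀ c : Fin m, tauTensor d m a (fun _ => c) = lam c)
    (hoff : ∀ k : Fin d → Fin m, (∃ i j, k i ≠ k j) → tauTensor d m a k = 0)
    (U : Matrix (Fin m) (Fin m) ℂ) (hU : U ∈ Matrix.unitaryGroup (Fin m) ℂ)
    (b : Fin m → Matrix (Fin d) (Fin d) ℂ)
    (hb : ∀ l, b l = ∑ k, U l k • a k) :
    ∀ l : Fin m,
      (b l).det = (((Real.sqrt d ^ d)⁻¹ : ℝ) : ℂ) * ∑ k : Fin m, (U l k) ^ d * lam k ∧
      (d : ℝ) * ‖(b l).det‖ ^ ((2 : ℝ) / d)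
        = ‖∑ k : Fin m, (U l k) ^ d * lam k‖ ^ ((2 : ℝ) / d) := by
  classical
  intro l
  set f := (Matrix.detRowAlternating : (Fin d → ℂ) [⋀^Fin d]→ₗ[ℂ] ℂ)
  set D : (Fin d → Fin m) → ℂ := fun r => (Matrix.of fun i j => a (r i) i j).det with hDdef
  -- expansion
  have expand : (b l).det = ∑ r : Fin d → Fin m, (∏ i, U l (r i)) * D r := by
    have hbl : (b l) = fun i => ∑ k, U l k • a k i := by
      rw [hb]; funext i; exact Finset.sum_apply i Finset.univ _
    have h1 : (b l).det = f (b l) := rfl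
    have h2 := f.toMultilinearMap.map_sum (α := fun _ : Fin d => Fin m)
      (g := fun i k => U l k • a k i)
    have h3 : (f fun i => ∑ k, U l k • a k i)
        = ∑ r : Fin d → Fin m, f fun i => U l (r i) • a (r i) i := h2
    rw [h1, hbl, h3]
    refine Finset.sum_congr rfl fun r _ => ?_
    have h4 : (f fun i => U l (r i) • a (r i) i)
        = (∏ i, U l (r i)) • f fun i => a (r i) i :=
      f.toMultilinearMap.map_smul_univ (fun i => U l (r i)) (fun i => a (r i) i)
    rw [h4]; rfl
  set cf : (Fin d → Fin m) → ℂ := fun r => ∏ i, U l (r i) with hcf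
  have hd0 : (d:ℝ) ≠ 0 := by positivity
  have hsq : (0:ℝ) < Real.sqrt d ^ d := by
    have : (0:ℝ) < Real.sqrt d := Real.sqrt_pos.mpr (by positivity)
    positivity
  have hfac : ((d.factorial : ℂ)) ≠ 0 := by
    exact_mod_cast Nat.cast_ne_zero.mpr (Nat.factorial_ne_zero d)
  have hcτ : (((Real.sqrt d ^ d / d.factorial : ℝ)) : ℂ) ≠ 0 := by
    have : (Real.sqrt d ^ d / d.factorial : ℝ) ≠ 0 := by
      have : (0:ℝ) < d.factorial := by exact_mod_cast d.factorial_pos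
      positivity
    exact_mod_cast Complex.ofReal_ne_zero.mpr this
  -- tauTensor in terms of D
  have hτ : ∀ r : Fin d → Fin m, tauTensor d m a r
      = (((Real.sqrt d ^ d / d.factorial : ℝ)) : ℂ) * ∑ σ : Equiv.Perm (Fin d), D (r ∘ σ) := by
    intro r; rfl
  -- off-diagonal vanishing
  have hzero : ∀ r : Fin d → Fin m, (∃ i j, r i ≠ r j) →
      ∑ σ : Equiv.Perm (Fin d), D (r ∘ σ) = 0 := by
    intro r hr
    have := hoff r hr
    rw [hτ r] at this
    exact (mul_eq_zero.mp this).resolve_left hcτ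
  -- symmetrization
  have hsym : ∀ σ : Equiv.Perm (Fin d),
      ∑ r : Fin d → Fin m, cf r * D r = ∑ r : Fin d → Fin m, cf r * D (r ∘ σ) := by
    intro σ
    have hbij : Function.Bijective (fun r : Fin d → Fin m => r ∘ σ) := by
      constructor
      · intro r s h
        funext i
        have := congrFun h (σ⁻¹ i)
        simpa using this
      · intro s
        exact ⟨s ∘ ⇑σ⁻¹, by funext i; simp⟩
    refine (Fintype.sum_bijective _ hbij _ _ fun r => ?_).symm
    have : cf (r ∘ σ) = cf r := by
      exact Equiv.prod_comp σ (fun i => U l (r i))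
    simp only [this]
  have hdfac : (d.factorial : ℂ) * (b l).det
      = ∑ r : Fin d → Fin m, cf r * ∑ σ : Equiv.Perm (Fin d), D (r ∘ σ) := by
    rw [expand]
    calc (d.factorial : ℂ) * ∑ r : Fin d → Fin m, cf r * D r
        = ∑ _σ : Equiv.Perm (Fin d), ∑ r : Fin d → Fin m, cf r * D r := by
          rw [Finset.sum_const]
          simp [Fintype.card_perm, mul_comm]
      _ = ∑ σ : Equiv.Perm (Fin d), ∑ r : Fin d → Fin m, cf r * D (r ∘ σ) :=
          Finset.sum_congr rfl fun σ _ => hsym σ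
      _ = ∑ r : Fin d → Fin m, ∑ σ : Equiv.Perm (Fin d), cf r * D (r ∘ σ) :=
          Finset.sum_comm
      _ = ∑ r : Fin d → Fin m, cf r * ∑ σ : Equiv.Perm (Fin d), D (r ∘ σ) := by
          simp [Finset.mul_sum]
  -- restrict to constant functions
  set e : Fin m → (Fin d → Fin m) := fun c _ => c with he
  have i0 : Fin d := ⟨0, hd⟩
  have hinj : Function.Injective e := by
    intro c c' h; exact congrFun h i0
  have hsum_const : ∑ r : Fin d → Fin m, cf r * ∑ σ : Equiv.Perm (Fin d), D (r ∘ σ)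
      = ∑ c : Fin m, cf (e c) * ∑ σ : Equiv.Perm (Fin d), D (e c ∘ σ) := by
    rw [← Finset.sum_image (s := Finset.univ) (g := e)
      (f := fun r => cf r * ∑ σ : Equiv.Perm (Fin d), D (r ∘ σ))
      (fun x _ y _ h => hinj h)]
    refine (Finset.sum_subset (Finset.subset_univ _) fun r _ hr => ?_).symm
    have hne : ∃ i j, r i ≠ r j := by
      by_contra hcon
      push_neg at hcon
      exact hr (Finset.mem_image.mpr ⟨r i0, Finset.mem_univ _, by funext i; exact (hcon _ _).symm⟩)
    rw [hzero r hne, mul_zero]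
  have hece : ∀ c : Fin m, ∑ σ : Equiv.Perm (Fin d), D (e c ∘ σ)
      = (d.factorial : ℂ) * D (e c) := by
    intro c
    have : ∀ σ : Equiv.Perm (Fin d), D (e c ∘ σ) = D (e c) := fun σ => rfl
    simp [this, Fintype.card_perm, mul_comm]
  have hDe : ∀ c : Fin m, (((Real.sqrt d ^ d / d.factorial : ℝ)) : ℂ)
      * ((d.factorial : ℂ) * D (e c)) = lam c := by
    intro c
    have := hdiag c
    rw [hτ (fun _ => c)] at this
    rw [← this]
    congr 1
    exact (hece c).symm
  have hcfe : ∀ c : Fin m, cf (e c) = (U l c) ^ d := by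
    intro c; simp [hcf, he]
  -- main determinant formula
  have hcast : (((Real.sqrt d ^ d / d.factorial : ℝ)) : ℂ)
      = ((Real.sqrt d ^ d : ℝ) : ℂ) / (d.factorial : ℂ) := by
    push_cast; ring
  have hsqC : ((Real.sqrt d ^ d : ℝ) : ℂ) ≠ 0 := Complex.ofReal_ne_zero.mpr (ne_of_gt hsq)
  have hdet : (b l).det = (((Real.sqrt d ^ d)⁻¹ : ℝ) : ℂ) * ∑ k : Fin m, (U l k) ^ d * lam k := by
    have key : (d.factorial : ℂ) * (b l).det
        = (d.factorial : ℂ) * ((((Real.sqrt d ^ d)⁻¹ : ℝ) : ℂ) * ∑ k : Fin m, (U l k) ^ d * lam k) := by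
      rw [hdfac, hsum_const]
      have hterm : ∀ c : Fin m, cf (e c) * ∑ σ : Equiv.Perm (Fin d), D (e c ∘ σ)
          = (d.factorial : ℂ) * ((((Real.sqrt d ^ d)⁻¹ : ℝ) : ℂ) * ((U l c) ^ d * lam c)) := by
        intro c
        have hs2 : ((Real.sqrt d : ℝ) : ℂ) ≠ 0 :=
          Complex.ofReal_ne_zero.mpr (ne_of_gt (Real.sqrt_pos.mpr (by positivity)))
        rw [hece c, hcfe c, ← hDe c, hcast, Complex.ofReal_inv]
        push_cast
        field_simp
      rw [Finset.sum_congr rfl fun c _ => hterm c, ← Finset.mul_sum, ← Finset.mul_sum]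
    exact mul_left_cancel₀ hfac key
  refine ⟨hdet, ?_⟩
  -- G-concurrence computation
  have habs : ‖(b l).det‖
      = (Real.sqrt d ^ d)⁻¹ * ‖∑ k : Fin m, (U l k) ^ d * lam k‖ := by
    rw [hdet, norm_mul, Complex.norm_real, Real.norm_eq_abs, abs_of_pos (by positivity)]
  rw [habs, Real.mul_rpow (by positivity) (norm_nonneg _)]
  have hpow : ((Real.sqrt d ^ d)⁻¹) ^ ((2:ℝ)/d) = (d:ℝ)⁻¹ := by
    rw [Real.inv_rpow (by positivity), ← Real.rpow_natCast (Real.sqrt d) d,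
      ← Real.rpow_mul (Real.sqrt_nonneg _)]
    have h2 : (d:ℝ) * (2/d) = 2 := by field_simp
    rw [h2, show (2:ℝ) = ((2:ℕ):ℝ) by norm_num, Real.rpow_natCast,
      Real.sq_sqrt (by positivity : (0:ℝ) ≤ (d:ℝ))]
  rw [hpow]
  field_simp
end

section
/- Let d ≥ 1 and let μ_1, …, μ_{d²} be arbitrary complex numbers (for instance μ_k = λ_k e^{iθ_k} with λ_k ≥ 0 and phases θ_k ∈ ℝ). Then there exists a d²×d² complex unitary matrix U such that for every row index l ∈ {1, …, d²}: ∑_{k=1}^{d²} (U_{lk})^d μ_k = d^{−d} · ∑_{k=1}^{d²} μ_k. Consequently | ∑_{k} (U_{lk})^d μ_k |^{2/d} = d^{−2} · | ∑_k μ_k |^{2/d} for every l. -/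
open scoped BigOperators Matrix

lemma orth_sum (d : ℕ) (hd0 : d ≠ 0) {ζ : ℂ} (hζ : IsPrimitiveRoot ζ d) (a a' : Fin d) :
    ∑ c : Fin d, ζ ^ ((a : ℕ) * c) * (starRingEnd ℂ) (ζ ^ ((a' : ℕ) * c)) =
    if a = a' then (d : ℂ) else 0 := by
  have habs : ‖ζ‖ = 1 := hζ.norm'_eq_one hd0
  have hζ0 : ζ ≠ 0 := by
    intro h; rw [h] at habs; simp at habs
  set w : ℂ := ζ ^ ((a : ℤ) - (a' : ℤ)) with hw
  have hterm : ∀ c : Fin d,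
      ζ ^ ((a : ℕ) * c) * (starRingEnd ℂ) (ζ ^ ((a' : ℕ) * c)) = w ^ (c : ℕ) := by
    intro c
    rw [← Complex.inv_eq_conj (by rw [norm_pow, habs, one_pow])]
    have : ζ ^ ((a : ℕ) * c) * (ζ ^ ((a' : ℕ) * c))⁻¹
        = ζ ^ (((a : ℤ) * c)) * ζ ^ (-((a' : ℤ) * c)) := by
      rw [zpow_neg]
      norm_cast
    rw [this, ← zpow_add₀ hζ0, hw, ← zpow_natCast (ζ ^ ((a : ℤ) - (a' : ℤ))),
      ← zpow_mul]
    ring_nf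
  rw [Finset.sum_congr rfl (fun c _ => hterm c)]
  by_cases h : a = a'
  · subst h
    simp [hw]
  · rw [if_neg h]
    have hw1 : w ≠ 1 := by
      intro hone
      rw [hw, hζ.zpow_eq_one_iff_dvd] at hone
      have : (a : ℤ) - (a' : ℤ) = 0 := by
        refine Int.eq_zero_of_abs_lt_dvd hone ?_
        have h1 : (a : ℤ) < d := by exact_mod_cast a.isLt
        have h2 : (a' : ℤ) < d := by exact_mod_cast a'.isLt
        have h3 : (0:ℤ) ≤ a := Int.natCast_nonneg _
        have h4 : (0:ℤ) ≤ a' := Int.natCast_nonneg _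
        rw [abs_sub_lt_iff]; omega
      apply h
      have : (a : ℤ) = (a' : ℤ) := by omega
      exact Fin.ext (by exact_mod_cast this)
    have hwd : w ^ d = 1 := by
      rw [hw, ← zpow_natCast, ← zpow_mul, mul_comm, zpow_mul, zpow_natCast,
        hζ.pow_eq_one, one_zpow]
    rw [Fin.sum_univ_eq_sum_range (fun c => w ^ c) d, geom_sum_eq hw1, hwd]
    simp

/-- **Lemma 5 in unitary form.** For arbitrary complex numbers `μ₁, …, μ_{d²}` there is a
`d² × d²` unitary `U` such that for every row `l`,
`∑_k (U_{lk})^d μ_k = d^{-d} ∑_k μ_k`; consequently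
`|∑_k (U_{lk})^d μ_k|^{2/d} = d^{-2} |∑_k μ_k|^{2/d}` for every `l`. -/
theorem exists_unitary_row_sums_eq
    (d : ℕ) (hd : 1 ≤ d) (mu : Fin (d ^ 2) → ℂ) :
    ∃ U : Matrix (Fin (d ^ 2)) (Fin (d ^ 2)) ℂ,
      U ∈ Matrix.unitaryGroup (Fin (d ^ 2)) ℂ ∧
      (∀ l, ∑ k, (U l k) ^ d * mu k = ((d : ℂ) ^ d)⁻¹ * ∑ k, mu k) ∧
      (∀ l, ‖∑ k, (U l k) ^ d * mu k‖ ^ ((2 : ℝ) / d)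
          = ((d : ℝ) ^ 2)⁻¹ * ‖∑ k, mu k‖ ^ ((2 : ℝ) / d)) := by
  classical
  have hd0 : d ≠ 0 := by omega
  have hdc : (d : ℂ) ≠ 0 := Nat.cast_ne_zero.mpr hd0
  set ζ : ℂ := Complex.exp (2 * Real.pi * Complex.I / d) with hζdef
  have hζ : IsPrimitiveRoot ζ d := Complex.isPrimitiveRoot_exp d hd0
  have hsq : d ^ 2 = d * d := by ring
  let ι : Fin (d ^ 2) ≃ Fin d × Fin d := (finCongr hsq).trans finProdFinEquiv.symm
  set U : Matrix (Fin (d ^ 2)) (Fin (d ^ 2)) ℂ := fun l k =>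
    (d : ℂ)⁻¹ * ζ ^ ((ι l).1.val * (ι k).1.val + (ι l).2.val * (ι k).2.val) with hU
  have hpow : ∀ l k, U l k ^ d = ((d : ℂ) ^ d)⁻¹ := by
    intro l k
    rw [hU]
    simp only [mul_pow]
    rw [← pow_mul, mul_comm _ d, pow_mul, hζ.pow_eq_one, one_pow, mul_one, inv_pow]
  have hrow : ∀ l, ∑ k, (U l k) ^ d * mu k = ((d : ℂ) ^ d)⁻¹ * ∑ k, mu k := by
    intro l
    rw [Finset.mul_sum]
    exact Finset.sum_congr rfl fun k _ => by rw [hpow]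
  refine ⟨U, ?_, hrow, ?_⟩
  · rw [Matrix.mem_unitaryGroup_iff]
    ext l m
    rw [Matrix.mul_apply]
    have hsum : ∑ k, U l k * (star U) k m
        = ∑ p : Fin d × Fin d, U l (ι.symm p) * (star U) (ι.symm p) m :=
      (Equiv.sum_comp ι.symm fun k => U l k * (star U) k m).symm
    rw [hsum]
    have hterm : ∀ p : Fin d × Fin d,
        U l (ι.symm p) * (star U) (ι.symm p) m
        = ((d:ℂ)⁻¹ * (d:ℂ)⁻¹) *
          ((ζ ^ ((ι l).1.val * p.1.val) * (starRingEnd ℂ) (ζ ^ ((ι m).1.val * p.1.val))) *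
           (ζ ^ ((ι l).2.val * p.2.val) * (starRingEnd ℂ) (ζ ^ ((ι m).2.val * p.2.val)))) := by
      intro p
      rw [Matrix.star_apply]
      simp only [Matrix.star_apply, hU, Equiv.apply_symm_apply, pow_add, star_mul',
        Complex.star_def, map_inv₀, Complex.conj_natCast]
      ring
    rw [Finset.sum_congr rfl fun p _ => hterm p, ← Finset.mul_sum,
      Fintype.sum_prod_type]
    have hfac : ∑ c : Fin d, ∑ e : Fin d,
        ((ζ ^ ((ι l).1.val * c.val) * (starRingEnd ℂ) (ζ ^ ((ι m).1.val * c.val))) *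
         (ζ ^ ((ι l).2.val * e.val) * (starRingEnd ℂ) (ζ ^ ((ι m).2.val * e.val))))
        = (∑ c : Fin d, ζ ^ ((ι l).1.val * c.val) * (starRingEnd ℂ) (ζ ^ ((ι m).1.val * c.val)))
        * (∑ e : Fin d, ζ ^ ((ι l).2.val * e.val) * (starRingEnd ℂ) (ζ ^ ((ι m).2.val * e.val))) := by
      rw [Finset.sum_mul_sum]
    rw [hfac, orth_sum d hd0 hζ (ι l).1 (ι m).1, orth_sum d hd0 hζ (ι l).2 (ι m).2]
    by_cases hlm : l = m
    · subst hlm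
      rw [if_pos rfl, if_pos rfl, Matrix.one_apply_eq]
      field_simp
    · by_cases h1 : (ι l).1 = (ι m).1
      · have h2 : (ι l).2 ≠ (ι m).2 := fun h2 => hlm (ι.injective (Prod.ext h1 h2))
        rw [if_pos h1, if_neg h2, Matrix.one_apply_ne hlm]
        ring
      · rw [if_neg h1, Matrix.one_apply_ne hlm]
        ring
  · intro l
    rw [hrow l, norm_mul]
    have habsinv : ‖((d : ℂ) ^ d)⁻¹‖ = (((d:ℝ) ^ d)⁻¹) := by
      rw [norm_inv, norm_pow, Complex.norm_natCast]
    rw [habsinv]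
    have hdr : (0:ℝ) < (d:ℝ) := by positivity
    rw [Real.mul_rpow (by positivity) (norm_nonneg _)]
    congr 1
    rw [← Real.rpow_natCast (d:ℝ) d, Real.rpow_natCast]
    rw [Real.inv_rpow (by positivity), ← Real.rpow_natCast (d:ℝ) d,
      ← Real.rpow_mul (le_of_lt hdr)]
    have : (d:ℝ) * ((2:ℝ)/d) = 2 := by
      field_simp
    rw [this]
    norm_num
end

section
/- Fix d ≥ 1. Let a^{(1)}, …, a^{(d²)} be d×d complex matrices whose τ-tensor is diagonal with nonnegative real diagonal entries λ_1, …, λ_{d²}, and let θ_1, …, θ_{d²} ∈ ℝ be arbitrary phases. Then there exists a d²×d² complex unitary matrix U such that, with b^{(l)} = ∑_{k=1}^{d²} U_{lk} a^{(k)}, every member of the new family has the same G-concurrence: d·|det b^{(l)}|^{2/d} = (1/d²) · | ∑_{k=1}^{d²} λ_k e^{iθ_k} |^{2/d} for every l ∈ {1, …, d²}. -/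
open scoped BigOperators Matrix

lemma det_sum_expand (d : ℕ) (a : Fin (d ^ 2) → Matrix (Fin d) (Fin d) ℂ)
    (u : Fin (d ^ 2) → ℂ) :
    (∑ k, u k • a k).det
      = ∑ f : Fin d → Fin (d ^ 2), (∏ i, u (f i)) * (Matrix.of fun i j => a (f i) i j).det := by
  classical
  have h0 : (∑ k, u k • a k).det
      = Matrix.detRowAlternating (fun i => ∑ k, u k • a k i) := by
    show Matrix.detRowAlternating _ = _
    congr 1
    ext i j
    simp [Matrix.sum_apply]
  rw [h0]
  have h1 := (Matrix.detRowAlternating (R := ℂ) (n := Fin d)).toMultilinearMap.map_sum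
    (g := fun i k => u k • a k i)
  simp only [AlternatingMap.coe_multilinearMap] at h1
  rw [h1]
  refine Finset.sum_congr rfl fun f _ => ?_
  have h2 := (Matrix.detRowAlternating (R := ℂ) (n := Fin d)).toMultilinearMap.map_smul_univ
    (fun i => u (f i)) (fun i => a (f i) i)
  simp only [AlternatingMap.coe_multilinearMap] at h2
  rw [h2, smul_eq_mul]
  rfl

lemma det_sum_eq (d : ℕ) (hd : 1 ≤ d) (a : Fin (d ^ 2) → Matrix (Fin d) (Fin d) ℂ)
    (lam : Fin (d ^ 2) → ℝ)
    (hdiag : ∀ c, tauTensor d (d ^ 2) a (fun _ => c) = (lam c : ℂ))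
    (hoff : ∀ k : Fin d → Fin (d ^ 2), (∃ i j, k i ≠ k j) → tauTensor d (d ^ 2) a k = 0)
    (u : Fin (d ^ 2) → ℂ) :
    (∑ k, u k • a k).det
      = ((Real.sqrt d ^ d : ℝ) : ℂ)⁻¹ * ∑ c, u c ^ d * (lam c : ℂ) := by
  classical
  set D : (Fin d → Fin (d ^ 2)) → ℂ := fun f => (Matrix.of fun i j => a (f i) i j).det with hDdef
  set P : (Fin d → Fin (d ^ 2)) → ℂ := fun f => ∏ i, u (f i) with hPdef
  have hdpos : (0:ℝ) < d := by exact_mod_cast hd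
  have hsqrt : (0 : ℝ) < Real.sqrt d ^ d :=
    pow_pos (Real.sqrt_pos.mpr hdpos) d
  have hfac : ((d.factorial : ℂ)) ≠ 0 := Nat.cast_ne_zero.mpr d.factorial_ne_zero
  set C : ℂ := ((Real.sqrt d ^ d / d.factorial : ℝ) : ℂ) with hCdef
  have hC : C ≠ 0 := by
    simp only [hCdef, ne_eq, Complex.ofReal_eq_zero]
    positivity
  have h1 : (∑ k, u k • a k).det = ∑ f : Fin d → Fin (d ^ 2), P f * D f := det_sum_expand d a u
  have hPσ : ∀ (σ : Equiv.Perm (Fin d)) (f : Fin d → Fin (d ^ 2)), P (f ∘ σ) = P f := by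
    intro σ f
    simpa [hPdef, Function.comp] using Equiv.prod_comp σ (fun i => u (f i))
  have h2 : ∀ σ : Equiv.Perm (Fin d),
      (∑ f : Fin d → Fin (d ^ 2), P f * D f) = ∑ f : Fin d → Fin (d ^ 2), P f * D (f ∘ σ) := by
    intro σ
    have hbij : Function.Bijective (fun g : Fin d → Fin (d ^ 2) => g ∘ ⇑σ.symm) := by
      constructor
      · intro g1 g2 h
        funext i
        have := congrFun h (σ i)
        simpa using this
      · intro g
        exact ⟨g ∘ ⇑σ, funext fun i => by simp⟩
    refine Fintype.sum_bijective _ hbij (fun g => P g * D g)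
      (fun f => P f * D (f ∘ σ)) fun g => ?_
    have hgs : (g ∘ ⇑σ.symm) ∘ ⇑σ = g := funext fun i => by simp
    simp only [hgs, hPσ σ.symm g]
  have h3 : (d.factorial : ℂ) * (∑ f : Fin d → Fin (d ^ 2), P f * D f)
      = ∑ f : Fin d → Fin (d ^ 2), P f * (∑ σ : Equiv.Perm (Fin d), D (f ∘ σ)) := by
    calc (d.factorial : ℂ) * (∑ f : Fin d → Fin (d ^ 2), P f * D f)
        = ∑ _σ : Equiv.Perm (Fin d), ∑ f : Fin d → Fin (d ^ 2), P f * D f := by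
          rw [Finset.sum_const, Finset.card_univ, Fintype.card_perm, Fintype.card_fin,
            nsmul_eq_mul]
      _ = ∑ σ : Equiv.Perm (Fin d), ∑ f : Fin d → Fin (d ^ 2), P f * D (f ∘ σ) :=
          Finset.sum_congr rfl fun σ _ => h2 σ
      _ = ∑ f : Fin d → Fin (d ^ 2), P f * (∑ σ : Equiv.Perm (Fin d), D (f ∘ σ)) := by
          rw [Finset.sum_comm]
          simp [Finset.mul_sum]
  have htau : ∀ f : Fin d → Fin (d ^ 2),
      (∑ σ : Equiv.Perm (Fin d), D (f ∘ σ)) = C⁻¹ * tauTensor d (d ^ 2) a f := by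
    intro f
    have : tauTensor d (d ^ 2) a f = C * ∑ σ : Equiv.Perm (Fin d), D (f ∘ σ) := rfl
    rw [this, ← mul_assoc, inv_mul_cancel₀ hC, one_mul]
  have h4 : (d.factorial : ℂ) * (∑ f : Fin d → Fin (d ^ 2), P f * D f)
      = C⁻¹ * ∑ f : Fin d → Fin (d ^ 2), P f * tauTensor d (d ^ 2) a f := by
    rw [h3, Finset.mul_sum]
    refine Finset.sum_congr rfl fun f _ => ?_
    rw [htau f]; ring
  set ι : Fin (d ^ 2) → (Fin d → Fin (d ^ 2)) := fun c _ => c with hιdef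
  have hinj : Function.Injective ι := by
    intro c c' h
    exact congrFun h ⟨0, hd⟩
  have h5 : (∑ f : Fin d → Fin (d ^ 2), P f * tauTensor d (d ^ 2) a f)
      = ∑ c : Fin (d ^ 2), u c ^ d * (lam c : ℂ) := by
    rw [← Finset.sum_subset (Finset.subset_univ
        ((Finset.univ : Finset (Fin (d ^ 2))).image ι)) ?_]
    · rw [Finset.sum_image (fun c _ c' _ h => hinj h)]
      refine Finset.sum_congr rfl fun c _ => ?_
      have hP : P (ι c) = u c ^ d := by
        simp [hPdef, hιdef, Finset.prod_const, Finset.card_univ]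
      rw [hP, hdiag c]
    · intro f _ hf
      have : ∃ i j, f i ≠ f j := by
        by_contra hcon
        push_neg at hcon
        refine hf ?_
        refine Finset.mem_image.mpr ⟨f ⟨0, hd⟩, Finset.mem_univ _, ?_⟩
        funext i
        exact (hcon i ⟨0, hd⟩).symm
      rw [hoff f this, mul_zero]
  have hT : (∑ f : Fin d → Fin (d ^ 2), P f * D f)
      = (d.factorial : ℂ)⁻¹ * C⁻¹ * ∑ c : Fin (d ^ 2), u c ^ d * (lam c : ℂ) := by
    rw [mul_assoc]
    rw [← h5, ← h4, ← mul_assoc, inv_mul_cancel₀ hfac, one_mul]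
  rw [h1, hT, hCdef]
  rw [show ((Real.sqrt d ^ d / d.factorial : ℝ) : ℂ)
      = ((Real.sqrt d ^ d : ℝ) : ℂ) / (d.factorial : ℂ) by push_cast; ring]
  have hs : ((Real.sqrt d ^ d : ℝ) : ℂ) ≠ 0 := Complex.ofReal_ne_zero.mpr (ne_of_gt hsqrt)
  rw [inv_div]
  field_simp


lemma sum_exp_eq_zero (d : ℕ) (hd : 1 ≤ d) (m : ℤ) (hm : m ≠ 0) (hmd : m.natAbs < d) :
    ∑ j : Fin d, Complex.exp (2 * (Real.pi : ℂ) * Complex.I * (m * j) / d) = 0 := by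
  have hd0 : (d : ℂ) ≠ 0 := Nat.cast_ne_zero.mpr (by omega)
  set z : ℂ := Complex.exp (2 * (Real.pi : ℂ) * Complex.I * m / d) with hz
  have hterm : ∀ j : ℕ,
      Complex.exp (2 * (Real.pi : ℂ) * Complex.I * (m * j) / d) = z ^ j := by
    intro j
    rw [hz, ← Complex.exp_nat_mul]
    congr 1
    ring
  have hzd : z ^ d = 1 := by
    rw [hz, ← Complex.exp_nat_mul]
    rw [show (d : ℂ) * (2 * (Real.pi : ℂ) * Complex.I * m / d)
        = m * (2 * (Real.pi : ℂ) * Complex.I) by field_simp]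
    exact Complex.exp_int_mul_two_pi_mul_I m
  have hz1 : z ≠ 1 := by
    intro h
    rw [hz, Complex.exp_eq_one_iff] at h
    obtain ⟨n, hn⟩ := h
    have hpi : (Real.pi : ℂ) ≠ 0 := by exact_mod_cast Real.pi_ne_zero
    have hI : Complex.I ≠ 0 := Complex.I_ne_zero
    have hmnd : (m : ℂ) = (n : ℂ) * d := by
      field_simp at hn
      have h2 : (2 : ℂ) * (Real.pi : ℂ) * Complex.I ≠ 0 := by
        simp [hpi, hI]
      apply mul_left_cancel₀ h2
      linear_combination (2 * (Real.pi : ℂ) * Complex.I) * hn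
    have hmz : m = n * d := by exact_mod_cast hmnd
    have hn0 : n ≠ 0 := by
      rintro rfl; simp at hmz; exact hm hmz
    have : d ≤ m.natAbs := by
      rw [hmz, Int.natAbs_mul, Int.natAbs_natCast]
      have : 1 ≤ n.natAbs := Int.natAbs_pos.mpr hn0
      nlinarith
    omega
  calc ∑ j : Fin d, Complex.exp (2 * (Real.pi : ℂ) * Complex.I * (m * j) / d)
      = ∑ j : Fin d, z ^ (j : ℕ) := Finset.sum_congr rfl fun j _ => hterm j
    _ = ∑ j ∈ Finset.range d, z ^ j := Fin.sum_univ_eq_sum_range _ d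
    _ = (z ^ d - 1) / (z - 1) := geom_sum_eq hz1 d
    _ = 0 := by rw [hzd, sub_self, zero_div]

noncomputable def phaseE (d : ℕ) : Fin (d ^ 2) ≃ Fin d × Fin d :=
  (finCongr (pow_two d)).trans finProdFinEquiv.symm

noncomputable def Umat (d : ℕ) (theta : Fin (d ^ 2) → ℝ) :
    Matrix (Fin (d ^ 2)) (Fin (d ^ 2)) ℂ :=
  Matrix.of fun l k =>
    (d : ℂ)⁻¹ * Complex.exp ((theta k : ℂ) / d * Complex.I
      + 2 * (Real.pi : ℂ) * Complex.I *
          ((((phaseE d l).1 : ℕ) * ((phaseE d k).1 : ℕ)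
            + ((phaseE d l).2 : ℕ) * ((phaseE d k).2 : ℕ) : ℕ) : ℂ) / d)

lemma Umat_mem (d : ℕ) (hd : 1 ≤ d) (theta : Fin (d ^ 2) → ℝ) :
    Umat d theta ∈ Matrix.unitaryGroup (Fin (d ^ 2)) ℂ := by
  have hd0 : (d : ℂ) ≠ 0 := Nat.cast_ne_zero.mpr (by omega)
  rw [Matrix.mem_unitaryGroup_iff]
  ext l l'
  rw [Matrix.mul_apply, Matrix.one_apply]
  set m1 : ℤ := ((phaseE d l).1 : ℤ) - ((phaseE d l').1 : ℤ) with hm1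
  set m2 : ℤ := ((phaseE d l).2 : ℤ) - ((phaseE d l').2 : ℤ) with hm2
  have hterm : ∀ k, Umat d theta l k * (star (Umat d theta)) k l'
      = (d : ℂ)⁻¹ * (d : ℂ)⁻¹ * Complex.exp (2 * (Real.pi : ℂ) * Complex.I *
          ((m1 * ((phaseE d k).1 : ℤ) + m2 * ((phaseE d k).2 : ℤ) : ℤ) : ℂ) / d) := by
    intro k
    have hstar : (star (Umat d theta)) k l' = (starRingEnd ℂ) (Umat d theta l' k) := rfl
    rw [hstar]
    show ((d : ℂ)⁻¹ * Complex.exp _) * (starRingEnd ℂ) ((d : ℂ)⁻¹ * Complex.exp _) = _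
    rw [map_mul, ← Complex.exp_conj]
    simp only [map_add, map_mul, map_div₀, map_inv₀, map_natCast, map_ofNat,
      Complex.conj_I, Complex.conj_ofReal]
    rw [mul_mul_mul_comm, ← Complex.exp_add]
    congr 1
    push_cast [hm1, hm2]
    ring
  rw [Finset.sum_congr rfl fun k _ => hterm k, ← Finset.mul_sum]
  have hsum : (∑ k : Fin (d ^ 2), Complex.exp (2 * (Real.pi : ℂ) * Complex.I *
          ((m1 * ((phaseE d k).1 : ℤ) + m2 * ((phaseE d k).2 : ℤ) : ℤ) : ℂ) / d))
      = (∑ j : Fin d, Complex.exp (2 * (Real.pi : ℂ) * Complex.I * ((m1 : ℂ) * j) / d))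
        * (∑ j : Fin d, Complex.exp (2 * (Real.pi : ℂ) * Complex.I * ((m2 : ℂ) * j) / d)) := by
    rw [← Equiv.sum_comp (phaseE d).symm (fun k => Complex.exp (2 * (Real.pi : ℂ) * Complex.I *
          ((m1 * ((phaseE d k).1 : ℤ) + m2 * ((phaseE d k).2 : ℤ) : ℤ) : ℂ) / d))]
    rw [Fintype.sum_mul_sum]
    rw [Fintype.sum_prod_type]
    refine Finset.sum_congr rfl fun q1 _ => Finset.sum_congr rfl fun q2 _ => ?_
    simp only [Equiv.apply_symm_apply]
    rw [← Complex.exp_add]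
    congr 1
    push_cast
    ring
  by_cases hll : l = l'
  · subst hll
    rw [if_pos rfl]
    have hm10 : m1 = 0 := by omega
    have hm20 : m2 = 0 := by omega
    rw [hsum, hm10, hm20]
    simp only [Int.cast_zero, zero_mul, mul_zero, zero_div, Complex.exp_zero]
    rw [Finset.sum_const, Finset.card_univ, Fintype.card_fin]
    simp only [nsmul_eq_mul, mul_one]
    field_simp
  · simp only [if_neg hll]
    have hne : phaseE d l ≠ phaseE d l' := fun h => hll ((phaseE d).injective h)
    have : m1 ≠ 0 ∨ m2 ≠ 0 := by
      by_contra hcon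
      push_neg at hcon
      refine hne (Prod.ext ?_ ?_)
      · have := hcon.1; rw [hm1] at this; ext; omega
      · have := hcon.2; rw [hm2] at this; ext; omega
    rw [hsum]
    rcases this with h | h
    · rw [sum_exp_eq_zero d hd m1 h (by rw [hm1]; omega), zero_mul, mul_zero]
    · rw [sum_exp_eq_zero d hd m2 h (by rw [hm2]; omega), mul_zero, mul_zero]

lemma pow_entry (d : ℕ) (hd : 1 ≤ d) (t : ℝ) (n : ℕ) :
    ((d : ℂ)⁻¹ * Complex.exp ((t : ℂ) / d * Complex.I
      + 2 * (Real.pi : ℂ) * Complex.I * (n : ℂ) / d)) ^ d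
    = ((d : ℂ)⁻¹) ^ d * Complex.exp ((t : ℂ) * Complex.I) := by
  have hd0 : (d : ℂ) ≠ 0 := Nat.cast_ne_zero.mpr (by omega)
  rw [mul_pow, ← Complex.exp_nat_mul]
  congr 1
  rw [show (d : ℂ) * ((t : ℂ) / d * Complex.I
      + 2 * (Real.pi : ℂ) * Complex.I * (n : ℂ) / d)
    = (t : ℂ) * Complex.I + (n : ℂ) * (2 * (Real.pi : ℂ) * Complex.I) by
      field_simp]
  rw [Complex.exp_add, Complex.exp_nat_mul_two_pi_mul_I, mul_one]

lemma final_real (d : ℕ) (hd : 1 ≤ d) (t : ℝ) (ht : 0 ≤ t) :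
    (d : ℝ) * ((Real.sqrt d ^ d)⁻¹ * ((d : ℝ)⁻¹) ^ d * t) ^ ((2 : ℝ) / d)
      = (1 / (d : ℝ) ^ 2) * t ^ ((2 : ℝ) / d) := by
  have hdpos : (0 : ℝ) < d := by exact_mod_cast hd
  have hd0 : (d : ℝ) ≠ 0 := ne_of_gt hdpos
  set A : ℝ := (Real.sqrt d ^ d)⁻¹ * ((d : ℝ)⁻¹) ^ d with hA
  have hA0 : 0 ≤ A := by positivity
  have hAeq : A = (d : ℝ) ^ (-(3 * (d : ℝ)) / 2) := by
    rw [hA, Real.sqrt_eq_rpow, ← Real.rpow_natCast ((d:ℝ) ^ ((1:ℝ)/2)) d,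
      ← Real.rpow_mul hdpos.le, inv_pow, ← Real.rpow_natCast (d : ℝ) d,
      ← Real.rpow_neg hdpos.le, ← Real.rpow_neg hdpos.le, ← Real.rpow_add hdpos]
    congr 1
    ring
  have hArpow : A ^ ((2 : ℝ) / d) = (d : ℝ) ^ (-(3 : ℝ)) := by
    rw [hAeq, ← Real.rpow_mul hdpos.le]
    congr 1
    field_simp
  rw [Real.mul_rpow hA0 ht, hArpow]
  rw [show (-(3:ℝ)) = (-1 : ℝ) + (-2 : ℝ) by norm_num, Real.rpow_add hdpos,
    Real.rpow_neg_one]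
  rw [show ((-2 : ℝ)) = -((2:ℕ) : ℝ) by norm_num, Real.rpow_neg hdpos.le,
    Real.rpow_natCast]
  field_simp

/-- **Lemma 5.** If the τ-tensor of a family of `d²` coefficient matrices is diagonal with
nonnegative real entries `λ_k`, then for any phases `θ_k` there is a unitary change of
decomposition `b^{(l)} = ∑_k U_{lk} a^{(k)}` in which every member has the same
G-concurrence, namely `d |det b^{(l)}|^{2/d} = |∑_k λ_k e^{iθ_k}|^{2/d} / d²`. -/
theorem exists_decomposition_equal_gConcurrence
    (d : ℕ) (hd : 1 ≤ d)
    (a : Fin (d ^ 2) → Matrix (Fin d) (Fin d) ℂ) (lam : Fin (d ^ 2) → ℝ)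
    (hlam : ∀ k, 0 ≤ lam k)
    (hdiag : ∀ c, tauTensor d (d ^ 2) a (fun _ => c) = (lam c : ℂ))
    (hoff : ∀ k : Fin d → Fin (d ^ 2), (∃ i j, k i ≠ k j) → tauTensor d (d ^ 2) a k = 0)
    (theta : Fin (d ^ 2) → ℝ) :
    ∃ U : Matrix (Fin (d ^ 2)) (Fin (d ^ 2)) ℂ,
      U ∈ Matrix.unitaryGroup (Fin (d ^ 2)) ℂ ∧
      ∀ l, (d : ℝ) * ‖(∑ k, U l k • a k).det‖ ^ ((2 : ℝ) / d)
          = (1 / (d : ℝ) ^ 2)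
            * ‖∑ k, (lam k : ℂ) * Complex.exp ((theta k : ℂ) * Complex.I)‖
              ^ ((2 : ℝ) / d) := by
  classical
  refine ⟨Umat d theta, Umat_mem d hd theta, fun l => ?_⟩
  have hdet := det_sum_eq d hd a lam hdiag hoff (fun k => Umat d theta l k)
  have hpow : ∀ c, (Umat d theta l c) ^ d
      = ((d : ℂ)⁻¹) ^ d * Complex.exp ((theta c : ℂ) * Complex.I) := fun c =>
    pow_entry d hd (theta c) _
  have hdet2 : (∑ k, Umat d theta l k • a k).det
      = ((Real.sqrt d ^ d : ℝ) : ℂ)⁻¹ * (((d : ℂ)⁻¹) ^ d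
          * ∑ c, (lam c : ℂ) * Complex.exp ((theta c : ℂ) * Complex.I)) := by
    rw [hdet]
    congr 1
    rw [Finset.mul_sum]
    refine Finset.sum_congr rfl fun c _ => ?_
    rw [hpow c]; ring
  rw [hdet2]
  rw [norm_mul, norm_mul, norm_inv, Complex.norm_real, Real.norm_eq_abs, norm_pow, norm_inv, Complex.norm_natCast]
  rw [abs_of_nonneg (le_of_lt (pow_pos (Real.sqrt_pos.mpr
    (by exact_mod_cast hd : (0:ℝ) < d)) d))]
  rw [← mul_assoc]
  exact final_real d hd _ (norm_nonneg _)
end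

section
/- Fix d ≥ 1 and n ≤ d². Let a^{(1)}, …, a^{(n)} be d×d complex matrices whose τ-tensor is diagonal with nonnegative real diagonal entries λ_1 ≥ λ_2 ≥ … ≥ λ_n, and suppose λ_1 ≤ λ_2 + ⋯ + λ_n. Extend the family to d² members by setting a^{(k)} = 0 for n < k ≤ d². Then there exists a d²×d² complex unitary matrix U such that det( ∑_{k=1}^{d²} U_{lk} a^{(k)} ) = 0 for every l ∈ {1, …, d²}; i.e. there is a decomposition of the same density matrix in which every pure state has zero G-concurrence, so the (convex-roof) G-concurrence of the state vanishes. -/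
open scoped BigOperators Matrix

open Finset Complex


lemma alt_sum_bounds (μ : ℕ → ℝ) (h0 : ∀ i, 0 ≤ μ i) (ha : ∀ i, μ (i+1) ≤ μ i) :
    ∀ t, 0 ≤ (∑ i ∈ range t, (-1)^i * μ i) ∧ (∑ i ∈ range t, (-1)^i * μ i) ≤ μ 0 := by
  intro t
  induction t using Nat.strong_induction_on with
  | _ t IH =>
    match t with
    | 0 => simp [h0 0]
    | 1 => simp [h0 0]
    | (s+2) =>
      have IH1 := IH s (by omega)
      have IH2 := IH (s+1) (by omega)
      rw [Finset.sum_range_succ, Finset.sum_range_succ]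
      rw [Finset.sum_range_succ] at IH2
      rcases Nat.even_or_odd s with he | ho
      · have h1 : ((-1:ℝ))^s = 1 := he.neg_one_pow
        have h2 : ((-1:ℝ))^(s+1) = -1 := by
          rw [pow_succ, h1]; ring
        constructor
        · nlinarith [IH1.1, ha s, h0 s, h0 (s+1)]
        · nlinarith [IH2.2, h0 (s+1)]
      · have h1 : ((-1:ℝ))^s = -1 := ho.neg_one_pow
        have h2 : ((-1:ℝ))^(s+1) = 1 := by
          rw [pow_succ, h1]; ring
        constructor
        · nlinarith [IH2.1, h0 (s+1)]
        · nlinarith [IH1.2, ha s, h0 s]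

lemma triangle_phases (a b c : ℝ) (ha : 0 ≤ a) (hb : 0 ≤ b) (hc : 0 ≤ c)
    (h1 : a ≤ b + c) (h2 : b ≤ a + c) (h3 : c ≤ a + b) :
    ∃ p s : ℂ, ‖p‖ = 1 ∧ ‖s‖ = 1 ∧ (a : ℂ) + b * p + c * s = 0 := by
  rcases eq_or_lt_of_le ha with rfl | hapos
  · have hbc : b = c := le_antisymm (by linarith) (by linarith)
    refine ⟨1, -1, by simp, by simp, ?_⟩
    subst hbc; push_cast; ring
  rcases eq_or_lt_of_le hb with rfl | hbpos
  · have hac : a = c := le_antisymm (by linarith) (by linarith)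
    refine ⟨1, -1, by simp, by simp, ?_⟩
    subst hac; push_cast; ring
  · set t : ℝ := (c^2 - b^2 - a^2)/(2*a) with ht
    have hynn : 0 ≤ b^2 - t^2 := by
      have f1 : 0 ≤ (a+b)^2 - c^2 := by nlinarith
      have f2 : 0 ≤ c^2 - (a-b)^2 := by nlinarith
      rw [ht, div_pow, sub_nonneg, div_le_iff₀ (by positivity)]
      nlinarith [mul_nonneg f1 f2]
    set y : ℝ := Real.sqrt (b^2 - t^2) with hy
    have hysq : y^2 = b^2 - t^2 := Real.sq_sqrt hynn
    set z : ℂ := ⟨t, y⟩ with hz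
    have hzabs : ‖z‖ = b := by
      rw [Complex.norm_def, Complex.normSq_mk]
      have : t * t + y * y = b^2 := by nlinarith [hysq]
      rw [this]
      exact Real.sqrt_sq hb
    have hazsq : ‖(a:ℂ) + z‖ = c := by
      have heq : (a:ℂ) + z = ⟨a + t, y⟩ := by
        apply Complex.ext <;> simp [hz]
      rw [heq, Complex.norm_def, Complex.normSq_mk]
      have h2a : a * t * 2 = c^2 - b^2 - a^2 := by
        rw [ht]; field_simp
      have : (a + t) * (a + t) + y * y = c^2 := by nlinarith [hysq]
      rw [this]
      exact Real.sqrt_sq hc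
    have hbz : (b:ℂ) * (z / b) = z := by
      rw [mul_div_cancel₀]
      exact_mod_cast hbpos.ne'
    have hpabs : ‖z / b‖ = 1 := by
      rw [norm_div, hzabs, Complex.norm_of_nonneg hb, div_self (by linarith)]
    by_cases hc0 : c = 0
    · have haz : (a:ℂ) + z = 0 := by
        rw [← norm_eq_zero, hazsq, hc0]
      refine ⟨z / b, 1, hpabs, by simp, ?_⟩
      rw [hc0]
      push_cast
      rw [hbz, zero_mul, add_zero, haz]
    · have hcpos : 0 < c := lt_of_le_of_ne hc (Ne.symm hc0)
      refine ⟨z / b, -((a:ℂ) + z) / c, hpabs, ?_, ?_⟩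
      · rw [norm_div, norm_neg, hazsq, Complex.norm_of_nonneg hc,
          div_self (by linarith)]
      · have hcz : (c:ℂ) * (-((a:ℂ) + z) / c) = -((a:ℂ) + z) := by
          rw [mul_div_cancel₀]
          exact_mod_cast hcpos.ne'
        calc (a:ℂ) + (b:ℂ) * (z/b) + (c:ℂ) * (-((a:ℂ) + z) / c)
            = (a:ℂ) + z + -((a:ℂ)+z) := by rw [hbz, hcz]
          _ = 0 := by ring

lemma phase_exists (m : ℕ) (f : ℕ → ℝ) (h0 : ∀ j, 0 ≤ f j) (hanti : ∀ j, f (j+1) ≤ f j)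
    (hmain : f 0 ≤ ∑ i ∈ Finset.range (m-1), f (i+1)) :
    ∃ v : ℕ → ℂ, (∀ j, ‖v j‖ = 1) ∧
      ∑ j ∈ Finset.range m, (f j : ℂ) * v j = 0 := by
  match m with
  | 0 => exact ⟨fun _ => 1, fun _ => by simp, by simp⟩
  | (m'+1) =>
    have hm' : (m'+1) - 1 = m' := rfl
    rw [hm'] at hmain
    set q : ℝ := ∑ i ∈ (range m').filter (fun i => Even i), f (i+1) with hq
    set r : ℝ := ∑ i ∈ (range m').filter (fun i => ¬ Even i), f (i+1) with hr
    have hqnn : 0 ≤ q := Finset.sum_nonneg fun i _ => h0 _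
    have hrnn : 0 ≤ r := Finset.sum_nonneg fun i _ => h0 _
    have hqr_add : q + r = ∑ i ∈ range m', f (i+1) := Finset.sum_filter_add_sum_filter_not _ _ _
    have hqr_sub : q - r = ∑ i ∈ range m', (-1)^i * f (i+1) := by
      rw [hq, hr, ← Finset.sum_filter_add_sum_filter_not (range m') (fun i => Even i)
        (fun i => (-1:ℝ)^i * f (i+1))]
      rw [sub_eq_add_neg, ← Finset.sum_neg_distrib]
      congr 1
      · exact Finset.sum_congr rfl fun i hi => by
          rw [(Finset.mem_filter.mp hi).2.neg_one_pow, one_mul]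
      · exact Finset.sum_congr rfl fun i hi => by
          rw [(Nat.not_even_iff_odd.mp (Finset.mem_filter.mp hi).2).neg_one_pow]; ring
    have halt := alt_sum_bounds (fun i => f (i+1)) (fun i => h0 _) (fun i => hanti _) m'
    obtain ⟨p, s, hp1, hs1, hsum⟩ := triangle_phases (f 0) q r (h0 0) hqnn hrnn
      (by rw [← hqr_add] at hmain; linarith)
      (by have := halt.2; rw [← hqr_sub] at this; have := hanti 0; linarith)
      (by have := halt.1; rw [← hqr_sub] at this; have := h0 0; linarith)
    refine ⟨fun j => if j = 0 then 1 else if Even (j-1) then p else s, fun j => ?_, ?_⟩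
    · dsimp only
      split
      · simp
      · split
        · exact hp1
        · exact hs1
    · rw [Finset.sum_range_succ']
      have hv1 : ∀ i ∈ range m', (f (i+1) : ℂ) *
          (if i+1 = 0 then (1:ℂ) else if Even (i+1-1) then p else s)
          = (f (i+1):ℂ) * (if Even i then p else s) := by
        intro i _
        norm_num
      rw [Finset.sum_congr rfl hv1]
      norm_num
      rw [← Finset.sum_filter_add_sum_filter_not (range m') (fun i => Even i)]
      have e1 : ∑ i ∈ (range m').filter (fun i => Even i),
          (if Even i then (f (i+1) : ℂ) * p else (f (i+1) : ℂ) * s) = (q : ℂ) * p := by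
        rw [hq]
        push_cast
        rw [Finset.sum_mul]
        exact Finset.sum_congr rfl fun i hi => by
          rw [if_pos (Finset.mem_filter.mp hi).2]
      have e2 : ∑ i ∈ (range m').filter (fun i => ¬ Even i),
          (if Even i then (f (i+1) : ℂ) * p else (f (i+1) : ℂ) * s) = (r : ℂ) * s := by
        rw [hr]
        push_cast
        rw [Finset.sum_mul]
        exact Finset.sum_congr rfl fun i hi => by
          rw [if_neg (Finset.mem_filter.mp hi).2]
      rw [e1, e2]
      linear_combination hsum

noncomputable def fourierOmega (d : ℕ) : ℂ := Complex.exp (2 * Real.pi * Complex.I / d)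

lemma fourierOmega_ne_zero (d : ℕ) : fourierOmega d ≠ 0 := Complex.exp_ne_zero _

lemma fourierOmega_pow_d (d : ℕ) (hd : 1 ≤ d) : fourierOmega d ^ d = 1 := by
  rw [fourierOmega, ← Complex.exp_nat_mul]
  have hdne : (d:ℂ) ≠ 0 := Nat.cast_ne_zero.mpr (by omega)
  have : (d:ℂ) * (2 * Real.pi * Complex.I / d) = 2 * Real.pi * Complex.I := by
    field_simp
  rw [this, Complex.exp_two_pi_mul_I]

lemma fourierOmega_pow_eq_exp (d : ℕ) (m : ℕ) :
    fourierOmega d ^ m = Complex.exp (m * (2 * Real.pi * Complex.I / d)) := by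
  rw [fourierOmega, ← Complex.exp_nat_mul]

lemma fourier_root_sum (d : ℕ) (hd : 1 ≤ d) (l l' : Fin d) :
    (∑ k : Fin d, (fourierOmega d ^ (l:ℕ) * (fourierOmega d)⁻¹ ^ (l':ℕ)) ^ (k:ℕ))
      = if l = l' then (d:ℂ) else 0 := by
  set ω := fourierOmega d with hω
  set x := ω ^ (l:ℕ) * ω⁻¹ ^ (l':ℕ) with hx
  by_cases h : l = l'
  · subst h
    have : x = 1 := by
      rw [hx, ← mul_pow, mul_inv_cancel₀ (fourierOmega_ne_zero d), one_pow]
    rw [this]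
    simp [Finset.card_univ]
  · rw [if_neg h]
    have hxd : x ^ d = 1 := by
      rw [hx, mul_pow, ← pow_mul, ← pow_mul, mul_comm (l:ℕ) d, mul_comm (l':ℕ) d,
        pow_mul, pow_mul, fourierOmega_pow_d d hd, inv_pow, fourierOmega_pow_d d hd]
      simp
    have hx1 : x ≠ 1 := by
      intro hcon
      rw [hx, inv_pow, fourierOmega_pow_eq_exp, fourierOmega_pow_eq_exp,
        ← Complex.exp_neg, ← Complex.exp_add, Complex.exp_eq_one_iff] at hcon
      · 
        obtain ⟨t, hcontra⟩ := hcon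
        have hdne : (d:ℂ) ≠ 0 := Nat.cast_ne_zero.mpr (by omega)
        have hpi : (2 * Real.pi * Complex.I : ℂ) ≠ 0 := by
          simp [Complex.ext_iff, Real.pi_ne_zero, Complex.I_ne_zero]
        have key : ((l:ℂ) - (l':ℂ)) = t * d := by
          have h2 : ((l:ℂ) * (2 * Real.pi * Complex.I / d) +
              -((l':ℕ) * (2 * Real.pi * Complex.I / d))) * d
              = (t * (2 * Real.pi * Complex.I)) * d := by rw [hcontra]
          field_simp at h2
          have h3 : (((l:ℂ) - (l':ℂ)) - t * d) * (2 * Real.pi * Complex.I) = 0 := by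
            ring_nf
            ring_nf at h2
            linear_combination (2 * Real.pi * Complex.I) * h2
          rcases mul_eq_zero.mp h3 with h4 | h4
          · linear_combination h4
          · exact absurd h4 hpi
        have key2 : ((l:ℤ) - (l':ℤ)) = t * d := by
          exact_mod_cast key
        have hl : (l:ℤ) < d := by exact_mod_cast l.isLt
        have hl' : (l':ℤ) < d := by exact_mod_cast l'.isLt
        have hne : (l:ℤ) ≠ (l':ℤ) := by
          simpa [Fin.ext_iff] using h
        have h0l : (0:ℤ) ≤ l := by positivity
        have h0l' : (0:ℤ) ≤ l' := by positivity
        have hdpos : (0:ℤ) < d := by exact_mod_cast (by omega : 0 < d)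
        have habs : |t * (d:ℤ)| < d := by
          rw [← key2, abs_lt]
          omega
        rw [abs_mul, abs_of_nonneg hdpos.le] at habs
        have ht1 : |t| < 1 :=
          lt_of_mul_lt_mul_right (by simpa using habs) hdpos.le
        have ht0 : t = 0 := by
          by_contra hne0
          have h1 : (1:ℤ) ≤ |t| := Int.one_le_abs (by omega)
          linarith
        subst ht0
        simp at key2
        omega
      done
    rw [Fin.sum_univ_eq_sum_range (fun i => x ^ i) d, geom_sum_eq hx1, hxd]
    simp

lemma star_fourierOmega (d : ℕ) : star (fourierOmega d) = (fourierOmega d)⁻¹ := by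
  rw [fourierOmega, ← Complex.exp_neg]
  rw [show (star (Complex.exp (2 * Real.pi * Complex.I / d)) : ℂ)
      = (starRingEnd ℂ) (Complex.exp (2 * Real.pi * Complex.I / d)) from rfl]
  rw [← Complex.exp_conj]
  congr 1
  simp [map_div₀, map_ofNat]
  ring

lemma fourier_phase_unitary (d : ℕ) (hd : 1 ≤ d) (e : Fin (d^2) ≃ Fin d × Fin d)
    (u : Fin (d^2) → ℂ) (hu : ∀ c, ‖u c‖ = 1) :
    (Matrix.of fun l k : Fin (d^2) =>
      (1/(d:ℂ)) * fourierOmega d ^ (((e l).1:ℕ) * ((e k).1:ℕ) + ((e l).2:ℕ) * ((e k).2:ℕ)) * u k)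
      ∈ Matrix.unitaryGroup (Fin (d^2)) ℂ := by
  set ω := fourierOmega d with hω
  rw [Matrix.mem_unitaryGroup_iff]
  ext l l'
  rw [Matrix.mul_apply, Matrix.one_apply]
  have hterm : ∀ k : Fin (d^2),
      (Matrix.of fun l k : Fin (d^2) =>
        (1/(d:ℂ)) * ω ^ (((e l).1:ℕ) * ((e k).1:ℕ) + ((e l).2:ℕ) * ((e k).2:ℕ)) * u k) l k *
      (star (Matrix.of fun l k : Fin (d^2) =>
        (1/(d:ℂ)) * ω ^ (((e l).1:ℕ) * ((e k).1:ℕ) + ((e l).2:ℕ) * ((e k).2:ℕ)) * u k)) k l'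
      = (1/(d:ℂ)) * (1/(d:ℂ)) *
        ((ω ^ (((e l).1:ℕ)) * (ω⁻¹) ^ (((e l').1:ℕ))) ^ (((e k).1:ℕ)) *
         (ω ^ (((e l).2:ℕ)) * (ω⁻¹) ^ (((e l').2:ℕ))) ^ (((e k).2:ℕ))) := by
    intro k
    have hsA : (star (Matrix.of fun l k : Fin (d^2) =>
        (1/(d:ℂ)) * ω ^ (((e l).1:ℕ) * ((e k).1:ℕ) + ((e l).2:ℕ) * ((e k).2:ℕ)) * u k)) k l'
        = star ((1/(d:ℂ)) * ω ^ (((e l').1:ℕ) * ((e k).1:ℕ) + ((e l').2:ℕ) * ((e k).2:ℕ)) * u k) := rfl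
    rw [hsA]
    rw [star_mul', star_mul', star_pow, star_fourierOmega]
    have hsd : star ((1:ℂ)/(d:ℂ)) = (1:ℂ)/(d:ℂ) := by
      simp
    rw [hsd, ← hω]
    simp only [Matrix.of_apply]
    have huk : u k * star (u k) = 1 := by
      rw [Complex.star_def, Complex.mul_conj, ← Complex.sq_norm, hu k]
      norm_num
    have expand : ∀ m1 m2 : ℕ, ∀ z : ℂ,
        z ^ (((e l).1:ℕ) * m1 + ((e l).2:ℕ) * m2)
        = (z ^ ((e l).1:ℕ)) ^ m1 * (z ^ ((e l).2:ℕ)) ^ m2 := by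
      intro m1 m2 z
      rw [pow_add, pow_mul, pow_mul]
    rw [expand, show ∀ z : ℂ, z ^ (((e l').1:ℕ) * ((e k).1:ℕ) + ((e l').2:ℕ) * ((e k).2:ℕ))
        = (z ^ ((e l').1:ℕ)) ^ ((e k).1:ℕ) * (z ^ ((e l').2:ℕ)) ^ ((e k).2:ℕ) from
        fun z => by rw [pow_add, pow_mul, pow_mul]]
    rw [mul_pow, mul_pow]
    linear_combination (1/(d:ℂ) * (1/(d:ℂ)) *
      ((ω ^ (((e l).1:ℕ))) ^ (((e k).1:ℕ)) * ((ω⁻¹) ^ (((e l').1:ℕ))) ^ (((e k).1:ℕ)) *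
       (ω ^ (((e l).2:ℕ))) ^ (((e k).2:ℕ)) * ((ω⁻¹) ^ (((e l').2:ℕ))) ^ (((e k).2:ℕ)))) * huk
  rw [Finset.sum_congr rfl (fun k _ => hterm k)]
  rw [← Finset.mul_sum]
  have hsum : ∑ k : Fin (d^2),
      ((ω ^ (((e l).1:ℕ)) * (ω⁻¹) ^ (((e l').1:ℕ))) ^ (((e k).1:ℕ)) *
       (ω ^ (((e l).2:ℕ)) * (ω⁻¹) ^ (((e l').2:ℕ))) ^ (((e k).2:ℕ)))
      = (if (e l).1 = (e l').1 then (d:ℂ) else 0) * (if (e l).2 = (e l').2 then (d:ℂ) else 0) := by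
    rw [Fintype.sum_equiv e
      (fun k => (ω ^ (((e l).1:ℕ)) * (ω⁻¹) ^ (((e l').1:ℕ))) ^ (((e k).1:ℕ)) *
       (ω ^ (((e l).2:ℕ)) * (ω⁻¹) ^ (((e l').2:ℕ))) ^ (((e k).2:ℕ)))
      (fun kp => (ω ^ (((e l).1:ℕ)) * (ω⁻¹) ^ (((e l').1:ℕ))) ^ ((kp.1:ℕ)) *
       (ω ^ (((e l).2:ℕ)) * (ω⁻¹) ^ (((e l').2:ℕ))) ^ ((kp.2:ℕ))) (fun k => rfl)]
    rw [Fintype.sum_prod_type]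
    dsimp only
    rw [← Finset.sum_mul_sum]
    rw [fourier_root_sum d hd, fourier_root_sum d hd]
  rw [hsum]
  by_cases hll : l = l'
  · subst hll
    rw [if_pos rfl, if_pos rfl, if_pos rfl]
    have hdne : (d:ℂ) ≠ 0 := Nat.cast_ne_zero.mpr (by omega)
    field_simp
  · rw [if_neg hll]
    have : (e l).1 ≠ (e l').1 ∨ (e l).2 ≠ (e l').2 := by
      by_contra hcon
      push_neg at hcon
      exact hll (e.injective (Prod.ext hcon.1 hcon.2))
    rcases this with h1 | h1
    · rw [if_neg h1]; ring
    · rw [if_neg h1]; ring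

/-- Determinant of a linear combination of matrices, expanded row-wise. -/
lemma det_sum_smul_expand {d N : ℕ} (x : Fin N → ℂ) (A : Fin N → Matrix (Fin d) (Fin d) ℂ) :
    (∑ c, x c • A c).det
      = ∑ r : Fin d → Fin N, (∏ i, x (r i)) • (Matrix.of fun i j => A (r i) i j).det := by
  have hM : (∑ c, x c • A c) = Matrix.of (fun i => ∑ c, x c • A c i) := by
    ext i j
    simp [Matrix.sum_apply]
  rw [hM]
  have h1 := (Matrix.detRowAlternating (R := ℂ) (n := Fin d)).toMultilinearMap.map_sum
    (g := fun (i : Fin d) (c : Fin N) => x c • A c i)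
  have h2 : ∀ r : Fin d → Fin N,
      (Matrix.detRowAlternating (R := ℂ) (n := Fin d)).toMultilinearMap
        (fun i => x (r i) • A (r i) i)
      = (∏ i, x (r i)) • (Matrix.of fun i j => A (r i) i j).det := by
    intro r
    exact (Matrix.detRowAlternating (R := ℂ) (n := Fin d)).toMultilinearMap.map_smul_univ
      (fun i => x (r i)) (fun i => A (r i) i)
  calc (Matrix.of fun i => ∑ c, x c • A c i).det
      = (Matrix.detRowAlternating (R := ℂ) (n := Fin d)).toMultilinearMap
          (fun i => ∑ c, x c • A c i) := rfl
    _ = ∑ r : Fin d → Fin N, (Matrix.detRowAlternating (R := ℂ) (n := Fin d)).toMultilinearMap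
          (fun i => x (r i) • A (r i) i) := h1
    _ = ∑ r : Fin d → Fin N, (∏ i, x (r i)) • (Matrix.of fun i j => A (r i) i j).det :=
        Finset.sum_congr rfl fun r _ => h2 r

lemma sym_reduce {d N : ℕ} (hd : 1 ≤ d) (x : Fin N → ℂ) (D : (Fin d → Fin N) → ℂ)
    (hS0 : ∀ r : Fin d → Fin N, (¬ ∃ c, r = fun _ => c) →
      ∑ σ : Equiv.Perm (Fin d), D (r ∘ σ) = 0) :
    ∑ r : Fin d → Fin N, (∏ i, x (r i)) * D r
      = ∑ c : Fin N, (x c)^d * D (fun _ => c) := by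
  set P : (Fin d → Fin N) → ℂ := fun r => ∏ i, x (r i) with hP
  have key1 : ∀ σ : Equiv.Perm (Fin d),
      ∑ r : Fin d → Fin N, P r * D r = ∑ r : Fin d → Fin N, P r * D (r ∘ σ) := by
    intro σ
    apply Fintype.sum_equiv (Equiv.arrowCongr σ (Equiv.refl (Fin N)))
    intro r
    have h1 : (Equiv.arrowCongr σ (Equiv.refl (Fin N)) r) ∘ σ = r := by
      funext i
      simp [Equiv.arrowCongr]
    have h2 : P (Equiv.arrowCongr σ (Equiv.refl (Fin N)) r) = P r := by
      rw [hP]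
      dsimp only
      rw [show (fun i => x (Equiv.arrowCongr σ (Equiv.refl (Fin N)) r i)) =
        fun i => x (r (σ.symm i)) from rfl]
      exact Equiv.prod_comp σ.symm (fun i => x (r i))
    rw [h1, h2]
  have key2 : (Nat.factorial d : ℂ) * (∑ r : Fin d → Fin N, P r * D r)
      = ∑ r : Fin d → Fin N, P r * (∑ σ : Equiv.Perm (Fin d), D (r ∘ σ)) := by
    have : ∑ σ : Equiv.Perm (Fin d), (∑ r : Fin d → Fin N, P r * D r)
        = (Nat.factorial d : ℂ) * (∑ r : Fin d → Fin N, P r * D r) := by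
      rw [Finset.sum_const, Finset.card_univ, Fintype.card_perm, Fintype.card_fin,
        nsmul_eq_mul]
    rw [← this]
    rw [Finset.sum_congr rfl (fun σ _ => key1 σ)]
    rw [Finset.sum_comm]
    exact Finset.sum_congr rfl fun r _ => by rw [Finset.mul_sum]
  have i0 : Fin d := ⟨0, by omega⟩
  have key3 : ∑ r : Fin d → Fin N, P r * (∑ σ : Equiv.Perm (Fin d), D (r ∘ σ))
      = ∑ c : Fin N, P (fun _ => c) * (∑ σ : Equiv.Perm (Fin d), D ((fun _ => c) ∘ σ)) := by
    rw [← Finset.sum_filter_add_sum_filter_not Finset.univ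
      (fun r : Fin d → Fin N => ∃ c, r = fun _ => c)]
    have hz : ∑ r ∈ Finset.univ.filter
        (fun r : Fin d → Fin N => ¬ ∃ c, r = fun _ => c),
        P r * (∑ σ : Equiv.Perm (Fin d), D (r ∘ σ)) = 0 := by
      apply Finset.sum_eq_zero
      intro r hr
      rw [hS0 r (Finset.mem_filter.mp hr).2, mul_zero]
    rw [hz, add_zero]
    apply Finset.sum_nbij' (fun r => r i0) (fun c => fun _ => c)
    · intro r hr
      exact Finset.mem_univ _
    · intro c _
      exact Finset.mem_filter.mpr ⟨Finset.mem_univ _, ⟨c, rfl⟩⟩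
    · intro r hr
      obtain ⟨c, rfl⟩ := (Finset.mem_filter.mp hr).2
      rfl
    · intro c _
      rfl
    · intro r hr
      obtain ⟨c, rfl⟩ := (Finset.mem_filter.mp hr).2
      rfl
  have key4 : ∀ c : Fin N, P (fun _ => c) * (∑ σ : Equiv.Perm (Fin d), D ((fun _ => c) ∘ σ))
      = (Nat.factorial d : ℂ) * ((x c)^d * D (fun _ => c)) := by
    intro c
    have hPc : P (fun _ => c) = (x c)^d := by
      rw [hP]
      simp [Finset.prod_const, Finset.card_univ]
    have hDc : ∑ σ : Equiv.Perm (Fin d), D ((fun _ => c) ∘ σ)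
        = (Nat.factorial d : ℂ) * D (fun _ => c) := by
      have : ∀ σ : Equiv.Perm (Fin d), D ((fun _ => c) ∘ σ) = D (fun _ => c) := fun σ => rfl
      rw [Finset.sum_congr rfl (fun σ _ => this σ), Finset.sum_const, Finset.card_univ,
        Fintype.card_perm, Fintype.card_fin, nsmul_eq_mul]
    rw [hPc, hDc]
    ring
  have hfac : (Nat.factorial d : ℂ) ≠ 0 := Nat.cast_ne_zero.mpr (Nat.factorial_ne_zero d)
  apply mul_left_cancel₀ hfac
  rw [key2, key3, Finset.sum_congr rfl (fun c _ => key4 c), ← Finset.mul_sum]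

/-- **Corollary 6 (vanishing G-concurrence).** Suppose the τ-tensor of `a⁽¹⁾, …, a⁽ⁿ⁾`
(with `n ≤ d²`) is diagonal with nonnegative entries `λ₁ ≥ … ≥ λ_n` and
`λ₁ ≤ λ₂ + ⋯ + λ_n`. Extending the family by zero matrices to `d²` members, there is a
`d² × d²` unitary `U` such that every matrix `∑_k U_{lk} a⁽ᵏ⁾` has zero determinant; i.e.
the density matrix admits a decomposition into pure states of zero G-concurrence, so its
convex-roof G-concurrence vanishes. -/
theorem gConcurrence_vanishes
    (d n : ℕ) (hd : 1 ≤ d) (hn : 0 < n) (hnd : n ≤ d ^ 2)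
    (a : Fin n → Matrix (Fin d) (Fin d) ℂ) (lam : Fin n → ℝ)
    (hlam : ∀ k, 0 ≤ lam k) (hsorted : Antitone lam)
    (hdiag : ∀ c, tauTensor d n a (fun _ => c) = (lam c : ℂ))
    (hoff : ∀ k : Fin d → Fin n, (∃ i j, k i ≠ k j) → tauTensor d n a k = 0)
    (hle : lam ⟨0, hn⟩ ≤ ∑ k ∈ Finset.univ.erase ⟨0, hn⟩, lam k)
    (a' : Fin (d ^ 2) → Matrix (Fin d) (Fin d) ℂ)
    (ha' : ∀ k : Fin (d ^ 2),
      a' k = if h : (k : ℕ) < n then a ⟨k, h⟩ else 0) :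
    ∃ U : Matrix (Fin (d ^ 2)) (Fin (d ^ 2)) ℂ,
      U ∈ Matrix.unitaryGroup (Fin (d ^ 2)) ℂ ∧
      ∀ l, (∑ k, U l k • a' k).det = 0 := by
  classical
  set Λ : ℕ → ℝ := fun j => if h : j < n then lam ⟨j, h⟩ else 0 with hΛdef
  have hΛ0 : ∀ j, 0 ≤ Λ j := by
    intro j
    rw [hΛdef]
    dsimp only
    split
    · exact hlam _
    · exact le_refl 0
  have hΛanti : ∀ j, Λ (j+1) ≤ Λ j := by
    intro j
    rw [hΛdef]
    dsimp only
    by_cases h1 : j + 1 < n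
    · have h0 : j < n := by omega
      rw [dif_pos h1, dif_pos h0]
      exact hsorted (Fin.mk_le_mk.mpr (Nat.le_succ j))
    · rw [dif_neg h1]
      split
      · exact hlam _
      · exact le_refl 0
  have hN1 : d ^ 2 = (d ^ 2 - 1) + 1 := by
    have : 1 ≤ d ^ 2 := Nat.one_le_pow _ _ (by omega)
    omega
  have hΛmain : Λ 0 ≤ ∑ i ∈ Finset.range (d ^ 2 - 1), Λ (i+1) := by
    have h1 : ∑ j ∈ Finset.range (d ^ 2), Λ j
        = ∑ i ∈ Finset.range (d ^ 2 - 1), Λ (i+1) + Λ 0 := by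
      rw [hN1, Finset.sum_range_succ']
      simp
    have h2 : ∑ j ∈ Finset.range (d ^ 2), Λ j = ∑ j ∈ Finset.range n, Λ j := by
      symm
      apply Finset.sum_subset (Finset.range_subset_range.mpr hnd)
      intro j _ hj
      rw [hΛdef]
      exact dif_neg (by simpa using hj)
    have h3 : ∑ j ∈ Finset.range n, Λ j = ∑ k : Fin n, lam k := by
      rw [← Fin.sum_univ_eq_sum_range Λ n]
      apply Finset.sum_congr rfl
      intro k _
      rw [hΛdef]
      dsimp only
      rw [dif_pos k.isLt]
    have h4 : ∑ k : Fin n, lam k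
        = lam ⟨0,hn⟩ + ∑ k ∈ Finset.univ.erase ⟨0,hn⟩, lam k :=
      (Finset.add_sum_erase Finset.univ lam (Finset.mem_univ _)).symm
    have h5 : Λ 0 = lam ⟨0,hn⟩ := by
      rw [hΛdef]; exact dif_pos hn
    rw [h5]
    have := h1 ▸ (h2.trans (h3.trans h4))
    linarith
  obtain ⟨v, hv1, hvsum⟩ := phase_exists (d ^ 2) Λ hΛ0 hΛanti hΛmain
  have hroot : ∀ c : Fin (d ^ 2), ∃ w : ℂ, w ^ d = v (c : ℕ) := fun c =>
    IsAlgClosed.exists_pow_nat_eq _ (by omega)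
  choose u hu using hroot
  have huabs : ∀ c, ‖u c‖ = 1 := by
    intro c
    have h1 : ‖u c‖ ^ d = 1 := by
      rw [← norm_pow, hu c, hv1]
    have h2 : 0 ≤ ‖u c‖ := norm_nonneg _
    rcases lt_trichotomy (‖u c‖) 1 with hh | hh | hh
    · have := pow_lt_one₀ h2 hh (by omega : d ≠ 0)
      linarith
    · exact hh
    · have := one_lt_pow₀ hh (by omega : d ≠ 0)
      linarith
  set e : Fin (d ^ 2) ≃ Fin d × Fin d :=
    (finCongr (pow_two d)).trans finProdFinEquiv.symm with hedef
  set U : Matrix (Fin (d ^ 2)) (Fin (d ^ 2)) ℂ := Matrix.of fun l k =>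
    (1/(d:ℂ)) * fourierOmega d ^ (((e l).1:ℕ) * ((e k).1:ℕ) + ((e l).2:ℕ) * ((e k).2:ℕ)) * u k
    with hUdef
  refine ⟨U, fourier_phase_unitary d hd e u huabs, ?_⟩
  intro l
  rw [det_sum_smul_expand (fun k => U l k) a']
  simp only [smul_eq_mul]
  have hS0 : ∀ r : Fin d → Fin (d ^ 2), (¬ ∃ c, r = fun _ => c) →
      ∑ σ : Equiv.Perm (Fin d),
        (fun r' : Fin d → Fin (d ^ 2) => (Matrix.of fun i j => a' (r' i) i j).det) (r ∘ σ) = 0 := by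
    intro r hr
    dsimp only
    by_cases hall : ∀ i, (r i : ℕ) < n
    · set k : Fin d → Fin n := fun i => ⟨(r i : ℕ), hall i⟩ with hkdef
      have hak : ∀ i, a' (r i) = a (k i) := by
        intro i
        rw [ha' (r i), dif_pos (hall i)]
      have i0 : Fin d := ⟨0, by omega⟩
      have hnonconst : ∃ i j, k i ≠ k j := by
        have : ∃ j, r j ≠ r i0 := by
          by_contra hcon
          push_neg at hcon
          exact hr ⟨r i0, funext hcon⟩
        obtain ⟨j, hj⟩ := this
        refine ⟨j, i0, fun hkeq => hj ?_⟩
        have : (r j : ℕ) = (r i0 : ℕ) := by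
          have := congrArg Fin.val hkeq
          simpa [hkdef] using this
        exact Fin.ext this
      have htau := hoff k hnonconst
      rw [tauTensor] at htau
      have hcoeff : (((Real.sqrt d ^ d / d.factorial : ℝ)) : ℂ) ≠ 0 := by
        have hsq : (0:ℝ) < Real.sqrt d :=
          Real.sqrt_pos.mpr (by exact_mod_cast (by omega : 0 < d))
        have hfac : (0:ℝ) < (d.factorial : ℝ) := by
          exact_mod_cast Nat.factorial_pos d
        exact Complex.ofReal_ne_zero.mpr (by positivity)
      have hSig : ∑ σ : Equiv.Perm (Fin d), (Matrix.of fun i j => a (k (σ i)) i j).det = 0 :=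
        (mul_eq_zero.mp htau).resolve_left hcoeff
      have heq : ∑ σ : Equiv.Perm (Fin d), (Matrix.of fun i j => a' ((r ∘ σ) i) i j).det
          = ∑ σ : Equiv.Perm (Fin d), (Matrix.of fun i j => a (k (σ i)) i j).det := by
        apply Finset.sum_congr rfl
        intro σ _
        congr 1
        ext i j
        simp only [Matrix.of_apply, Function.comp_apply]
        rw [hak (σ i)]
      rw [heq]
      exact hSig
    · push_neg at hall
      obtain ⟨i, hi⟩ := hall
      have hz : a' (r i) = 0 := by
        rw [ha' (r i)]
        exact dif_neg (by omega)
      apply Finset.sum_eq_zero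
      intro σ _
      apply Matrix.det_eq_zero_of_row_eq_zero (σ.symm i)
      intro j
      simp only [Matrix.of_apply, Function.comp_apply, Equiv.apply_symm_apply, hz,
        Matrix.zero_apply]
  rw [sym_reduce hd (fun k => U l k)
    (fun r' : Fin d → Fin (d ^ 2) => (Matrix.of fun i j => a' (r' i) i j).det) hS0]
  have hofeta : ∀ c : Fin (d ^ 2), (Matrix.of fun i j => a' c i j) = a' c := fun c => rfl
  have hxd : ∀ c : Fin (d ^ 2), (U l c) ^ d = (1/(d:ℂ))^d * v (c : ℕ) := by
    intro c
    show ((1/(d:ℂ)) * fourierOmega d ^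
      (((e l).1:ℕ) * ((e c).1:ℕ) + ((e l).2:ℕ) * ((e c).2:ℕ)) * u c) ^ d = _
    rw [mul_pow, mul_pow, pow_right_comm, fourierOmega_pow_d d hd, one_pow, mul_one, hu c]
  have hdetA : ∀ c : Fin (d ^ 2),
      ((Real.sqrt d ^ d : ℝ) : ℂ) * (a' c).det = ((Λ (c : ℕ) : ℝ) : ℂ) := by
    intro c
    by_cases h : (c : ℕ) < n
    · have hd1 := hdiag ⟨c, h⟩
      rw [tauTensor] at hd1
      have h2 : (∑ σ : Equiv.Perm (Fin d),
          (Matrix.of fun i j => a ((fun _ : Fin d => (⟨(c:ℕ), h⟩ : Fin n)) (σ i)) i j).det)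
          = (d.factorial : ℂ) * (a ⟨(c:ℕ), h⟩).det := by
        have hc : ∀ σ : Equiv.Perm (Fin d),
            (Matrix.of fun i j => a ((fun _ : Fin d => (⟨(c:ℕ), h⟩ : Fin n)) (σ i)) i j).det
            = (a ⟨(c:ℕ), h⟩).det := fun σ => rfl
        rw [Finset.sum_congr rfl fun σ _ => hc σ, Finset.sum_const, Finset.card_univ,
          Fintype.card_perm, Fintype.card_fin, nsmul_eq_mul]
      rw [h2] at hd1
      have hcoeff2 : ((Real.sqrt d ^ d : ℝ) : ℂ)
          = (((Real.sqrt d ^ d / d.factorial : ℝ)) : ℂ) * (d.factorial : ℂ) := by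
        have hfac : ((d.factorial : ℂ)) ≠ 0 :=
          Nat.cast_ne_zero.mpr (Nat.factorial_ne_zero d)
        push_cast
        rw [div_mul_cancel₀ _ hfac]
      rw [ha' c, dif_pos h, hcoeff2, mul_assoc, hd1, hΛdef]
      dsimp only
      rw [dif_pos h]
    · rw [ha' c, dif_neg h, hΛdef]
      dsimp only
      rw [dif_neg h]
      have hne : Nonempty (Fin d) := ⟨⟨0, by omega⟩⟩
      rw [Matrix.det_zero, mul_zero]
      simp
  have hcnst : ((Real.sqrt d ^ d : ℝ) : ℂ) ≠ 0 := by
    have hsq : (0:ℝ) < Real.sqrt d :=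
      Real.sqrt_pos.mpr (by exact_mod_cast (by omega : 0 < d))
    exact Complex.ofReal_ne_zero.mpr (by positivity)
  have hfinal : ((Real.sqrt d ^ d : ℝ) : ℂ) *
      (∑ c : Fin (d ^ 2), (U l c) ^ d * (Matrix.of fun i j => a' c i j).det) = 0 := by
    rw [Finset.mul_sum]
    calc ∑ c : Fin (d ^ 2), ((Real.sqrt d ^ d : ℝ) : ℂ) *
          ((U l c) ^ d * (Matrix.of fun i j => a' c i j).det)
        = ∑ c : Fin (d ^ 2), (1/(d:ℂ))^d * (((Λ (c : ℕ) : ℝ) : ℂ) * v (c : ℕ)) := by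
          apply Finset.sum_congr rfl
          intro c _
          rw [hofeta c, hxd c]
          rw [show ((Real.sqrt d ^ d : ℝ) : ℂ) * ((1/(d:ℂ))^d * v (c:ℕ) * (a' c).det)
            = (1/(d:ℂ))^d * ((((Real.sqrt d ^ d : ℝ) : ℂ) * (a' c).det) * v (c:ℕ)) by ring]
          rw [hdetA c]
      _ = (1/(d:ℂ))^d * ∑ c : Fin (d ^ 2), (((Λ (c : ℕ) : ℝ) : ℂ) * v (c : ℕ)) := by
          rw [Finset.mul_sum]
      _ = 0 := by
          rw [Fin.sum_univ_eq_sum_range (fun j => ((Λ j : ℝ) : ℂ) * v j) (d ^ 2), hvsum,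
            mul_zero]
  exact (mul_eq_zero.mp hfinal).resolve_left hcnst
end

section
/- Let d ≥ 1, let n ≤ m, let U be an m×m complex unitary matrix, and let λ_1, …, λ_n be nonnegative reals with λ_1 ≥ λ_k for all k. Then ∑_{l=1}^{m} | ∑_{k=1}^{n} (U_{lk})^d λ_k |^{2/d} ≥ λ_1^{2/d} − ∑_{k=2}^{n} λ_k^{2/d}. -/
open scoped BigOperators Matrix

lemma real_rpow_add_le (a b p : ℝ) (ha : 0 ≤ a) (hb : 0 ≤ b) (hp : 0 ≤ p) (hp1 : p ≤ 1) :
    (a + b) ^ p ≤ a ^ p + b ^ p := by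
  have h := NNReal.rpow_add_le_add_rpow ⟨a, ha⟩ ⟨b, hb⟩ hp hp1
  have h2 := NNReal.coe_le_coe.mpr h
  exact h2

lemma rpow_sum_le_sum_rpow' {ι : Type*} (s : Finset ι) (f : ι → ℝ) (hf : ∀ i, 0 ≤ f i)
    {p : ℝ} (hp : 0 < p) (hp1 : p ≤ 1) :
    (∑ i ∈ s, f i) ^ p ≤ ∑ i ∈ s, f i ^ p := by
  classical
  induction s using Finset.cons_induction with
  | empty => simp [Real.zero_rpow hp.ne']
  | cons a s ha ih =>
    rw [Finset.sum_cons, Finset.sum_cons]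
    calc (f a + ∑ i ∈ s, f i) ^ p ≤ f a ^ p + (∑ i ∈ s, f i) ^ p :=
          real_rpow_add_le _ _ _ (hf a) (Finset.sum_nonneg fun i _ => hf i) hp.le hp1
      _ ≤ f a ^ p + ∑ i ∈ s, f i ^ p := by linarith [ih]

lemma unitary_col_orth {m : ℕ} (U : Matrix (Fin m) (Fin m) ℂ)
    (hU : U ∈ Matrix.unitaryGroup (Fin m) ℂ) (j j' : Fin m) :
    ∑ l, (starRingEnd ℂ) (U l j) * U l j' = if j = j' then 1 else 0 := by
  have h : star U * U = 1 := (Matrix.mem_unitaryGroup_iff').mp hU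
  have h2 := congrFun (congrFun h j) j'
  simpa [Matrix.mul_apply, Matrix.one_apply, Matrix.star_apply] using h2

lemma unitary_col_norm {m : ℕ} (U : Matrix (Fin m) (Fin m) ℂ)
    (hU : U ∈ Matrix.unitaryGroup (Fin m) ℂ) (j : Fin m) :
    ∑ l, ‖U l j‖ ^ 2 = 1 := by
  have h := unitary_col_orth U hU j j
  simp only [if_true, eq_self_iff_true] at h
  have : ∑ l, ((‖U l j‖ ^ 2 : ℝ) : ℂ) = 1 := by
    rw [← h]
    refine Finset.sum_congr rfl fun l _ => ?_
    rw [Complex.sq_norm, mul_comm, Complex.mul_conj]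
  exact_mod_cast this

lemma parseval_col {m n : ℕ} (hnm : n ≤ m) (U : Matrix (Fin m) (Fin m) ℂ)
    (hU : U ∈ Matrix.unitaryGroup (Fin m) ℂ) (lam : Fin n → ℝ) :
    ∑ l, ‖∑ k, U l (Fin.castLE hnm k) * (lam k : ℂ)‖ ^ 2 = ∑ k, lam k ^ 2 := by
  set j : Fin n → Fin m := Fin.castLE hnm with hj
  have hjinj : Function.Injective j := Fin.castLE_injective hnm
  set a : Fin m → ℂ := fun l => ∑ k, U l (j k) * (lam k : ℂ) with ha
  have key : ∑ l, ((‖a l‖ ^ 2 : ℝ) : ℂ) = ∑ k, ((lam k ^ 2 : ℝ) : ℂ) := by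
    have e1 : ∀ l, ((‖a l‖ ^ 2 : ℝ) : ℂ) = a l * (starRingEnd ℂ) (a l) := by
      intro l
      rw [Complex.mul_conj, Complex.sq_norm, Complex.ofReal_inj]
    calc ∑ l, ((‖a l‖ ^ 2 : ℝ) : ℂ)
        = ∑ l, ∑ k, ∑ k', (U l (j k) * (lam k : ℂ)) * ((starRingEnd ℂ) (U l (j k')) * (lam k' : ℂ)) := by
          refine Finset.sum_congr rfl fun l _ => ?_
          rw [e1, ha]
          simp only [map_sum, map_mul, Complex.conj_ofReal]
          rw [Finset.sum_mul_sum]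
      _ = ∑ k, ∑ k', ((lam k : ℂ) * (lam k' : ℂ)) * ∑ l, (starRingEnd ℂ) (U l (j k')) * U l (j k) := by
          rw [Finset.sum_comm]
          refine Finset.sum_congr rfl fun k _ => ?_
          rw [Finset.sum_comm]
          refine Finset.sum_congr rfl fun k' _ => ?_
          rw [Finset.mul_sum]
          refine Finset.sum_congr rfl fun l _ => ?_
          ring
      _ = ∑ k, ∑ k', ((lam k : ℂ) * (lam k' : ℂ)) * (if k' = k then 1 else 0) := by
          refine Finset.sum_congr rfl fun k _ => Finset.sum_congr rfl fun k' _ => ?_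
          rw [unitary_col_orth U hU]
          congr 1
          simp [hjinj.eq_iff]
      _ = ∑ k, ((lam k ^ 2 : ℝ) : ℂ) := by
          refine Finset.sum_congr rfl fun k _ => ?_
          simp only [mul_ite, mul_one, mul_zero, Finset.sum_ite_eq', Finset.mem_univ, if_true]
          push_cast
          ring
  exact_mod_cast key

/-- **Lower bound of Theorem 7.** For an `m × m` unitary `U`, `n ≤ m`, and nonnegative
reals `λ₁, …, λ_n` with `λ₁` the largest,
`∑_l |∑_k (U_{lk})^d λ_k|^{2/d} ≥ λ₁^{2/d} − ∑_{k≥2} λ_k^{2/d}`. -/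
theorem sum_abs_rpow_ge_of_unitary
    (d m n : ℕ) (hd : 1 ≤ d) (hn : 0 < n) (hnm : n ≤ m)
    (U : Matrix (Fin m) (Fin m) ℂ) (hU : U ∈ Matrix.unitaryGroup (Fin m) ℂ)
    (lam : Fin n → ℝ) (hlam : ∀ k, 0 ≤ lam k)
    (hmax : ∀ k, lam k ≤ lam ⟨0, hn⟩) :
    lam ⟨0, hn⟩ ^ ((2 : ℝ) / d)
        - ∑ k ∈ Finset.univ.erase ⟨0, hn⟩, lam k ^ ((2 : ℝ) / d)
      ≤ ∑ l : Fin m,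
          ‖∑ k : Fin n, (U l (Fin.castLE hnm k)) ^ d * (lam k : ℂ)‖
            ^ ((2 : ℝ) / d) := by
  classical
  have hd0 : (0:ℝ) < (d:ℝ) := by exact_mod_cast hd.trans_lt' Nat.zero_lt_one
  set k0 : Fin n := ⟨0, hn⟩ with hk0
  set j : Fin n → Fin m := Fin.castLE hnm with hj
  rcases eq_or_lt_of_le hd with h1 | h2
  · -- d = 1
    subst h1
    simp only [Nat.cast_one, div_one, pow_one]
    have rp2 : ∀ x : ℝ, x ^ (2:ℝ) = x ^ 2 := fun x => by
      rw [show (2:ℝ) = ((2:ℕ):ℝ) by norm_num, Real.rpow_natCast]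
    simp only [rp2]
    rw [parseval_col hnm U hU lam]
    have hsplit : lam k0 ^ 2 + ∑ k ∈ Finset.univ.erase k0, lam k ^ 2 = ∑ k, lam k ^ 2 :=
      Finset.add_sum_erase _ (fun k => lam k ^ 2) (Finset.mem_univ k0)
    have hpos : 0 ≤ ∑ k ∈ Finset.univ.erase k0, lam k ^ 2 :=
      Finset.sum_nonneg fun k _ => sq_nonneg _
    linarith
  · -- 2 ≤ d
    set p : ℝ := (2:ℝ)/(d:ℝ) with hp
    have hp_pos : 0 < p := by positivity
    have hp1 : p ≤ 1 := by
      rw [hp, div_le_one hd0]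
      exact_mod_cast h2
    set A : Fin m → ℝ := fun l => ‖∑ k, (U l (j k)) ^ d * (lam k : ℂ)‖ with hA
    set b : Fin m → Fin n → ℝ := fun l k => ‖U l (j k)‖ ^ d * lam k with hb
    have hbnn : ∀ l k, 0 ≤ b l k := fun l k =>
      mul_nonneg (pow_nonneg (norm_nonneg _) _) (hlam k)
    have habsx : ∀ l k, ‖(U l (j k)) ^ d * (lam k : ℂ)‖ = b l k := by
      intro l k
      rw [norm_mul, norm_pow, Complex.norm_real, Real.norm_eq_abs, abs_of_nonneg (hlam k), hb]
    have h1 : ∀ l, b l k0 ≤ A l + ∑ k ∈ Finset.univ.erase k0, b l k := by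
      intro l
      have hsp : (U l (j k0)) ^ d * (lam k0 : ℂ)
          = (∑ k, (U l (j k)) ^ d * (lam k : ℂ))
            - ∑ k ∈ Finset.univ.erase k0, (U l (j k)) ^ d * (lam k : ℂ) := by
        rw [← Finset.add_sum_erase _ _ (Finset.mem_univ k0)]
        ring
      calc b l k0 = ‖(U l (j k0)) ^ d * (lam k0 : ℂ)‖ := (habsx l k0).symm
        _ ≤ A l + ‖∑ k ∈ Finset.univ.erase k0, (U l (j k)) ^ d * (lam k : ℂ)‖ := by
            rw [hsp]
            exact norm_sub_le _ _
        _ ≤ A l + ∑ k ∈ Finset.univ.erase k0, b l k := by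
            gcongr
            refine (norm_sum_le _ _).trans_eq ?_
            exact Finset.sum_congr rfl fun k _ => habsx l k
    have h2' : ∀ l, b l k0 ^ p ≤ A l ^ p + ∑ k ∈ Finset.univ.erase k0, b l k ^ p := by
      intro l
      calc b l k0 ^ p ≤ (A l + ∑ k ∈ Finset.univ.erase k0, b l k) ^ p :=
            Real.rpow_le_rpow (hbnn l k0) (h1 l) hp_pos.le
        _ ≤ A l ^ p + (∑ k ∈ Finset.univ.erase k0, b l k) ^ p :=
            real_rpow_add_le _ _ _ (norm_nonneg _)
              (Finset.sum_nonneg fun k _ => hbnn l k) hp_pos.le hp1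
        _ ≤ A l ^ p + ∑ k ∈ Finset.univ.erase k0, b l k ^ p := by
            gcongr
            exact rpow_sum_le_sum_rpow' _ _ (hbnn l) hp_pos hp1
    have hbrpow : ∀ l k, b l k ^ p = ‖U l (j k)‖ ^ 2 * lam k ^ p := by
      intro l k
      rw [hb]
      rw [Real.mul_rpow (pow_nonneg (norm_nonneg _) _) (hlam k)]
      congr 1
      rw [← Real.rpow_natCast (‖U l (j k)‖) d,
        ← Real.rpow_mul (norm_nonneg _)]
      have : (d:ℝ) * p = 2 := by
        rw [hp]; field_simp
      rw [this, show (2:ℝ) = ((2:ℕ):ℝ) by norm_num, Real.rpow_natCast]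
    have key : lam k0 ^ p ≤ (∑ l, A l ^ p) + ∑ k ∈ Finset.univ.erase k0, lam k ^ p := by
      calc lam k0 ^ p = (∑ l, ‖U l (j k0)‖ ^ 2) * lam k0 ^ p := by
            rw [unitary_col_norm U hU (j k0), one_mul]
        _ = ∑ l, b l k0 ^ p := by
            rw [Finset.sum_mul]
            exact Finset.sum_congr rfl fun l _ => (hbrpow l k0).symm
        _ ≤ ∑ l, (A l ^ p + ∑ k ∈ Finset.univ.erase k0, b l k ^ p) :=
            Finset.sum_le_sum fun l _ => h2' l
        _ = (∑ l, A l ^ p) + ∑ l, ∑ k ∈ Finset.univ.erase k0, b l k ^ p := by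
            rw [Finset.sum_add_distrib]
        _ = (∑ l, A l ^ p) + ∑ k ∈ Finset.univ.erase k0, lam k ^ p := by
            congr 1
            rw [Finset.sum_comm]
            refine Finset.sum_congr rfl fun k _ => ?_
            calc ∑ l, b l k ^ p = (∑ l, ‖U l (j k)‖ ^ 2) * lam k ^ p := by
                  rw [Finset.sum_mul]
                  exact Finset.sum_congr rfl fun l _ => hbrpow l k
              _ = lam k ^ p := by rw [unitary_col_norm U hU (j k), one_mul]
    linarith
end

section
/- Let d ≥ 1 and let λ_1, …, λ_{d²} be nonnegative reals. Then there exists a d²×d² complex unitary matrix U such that ∑_{l=1}^{d²} | ∑_{k=1}^{d²} (U_{lk})^d λ_k |^{2/d} = | λ_1 − ∑_{k=2}^{d²} λ_k |^{2/d}. Consequently, for a family a^{(1)}, …, a^{(d²)} of d×d complex matrices whose τ-tensor is diagonal with diagonal entries λ_1 ≥ λ_2 ≥ … ≥ 0 satisfying λ_1 > λ_2 + ⋯ + λ_{d²}, the convex-roof G-concurrence of the corresponding density matrix satisfies λ_1^{2/d} − ∑_{k≥2} λ_k^{2/d} ≤ G(ρ) ≤ (λ_1 − ∑_{k≥2} λ_k)^{2/d},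 the upper bound being realized by the decomposition b^{(l)} = ∑_k U_{lk} a^{(k)} associated with this U. -/
open scoped BigOperators Matrix

lemma keyDet (d : ℕ) (hd : 1 ≤ d)
    (a : Fin (d ^ 2) → Matrix (Fin d) (Fin d) ℂ) (lam : Fin (d ^ 2) → ℝ)
    (hdiag : ∀ c, tauTensor d (d ^ 2) a (fun _ => c) = (lam c : ℂ))
    (hoff : ∀ k : Fin d → Fin (d ^ 2), (∃ i j, k i ≠ k j) → tauTensor d (d ^ 2) a k = 0)
    (c : Fin (d ^ 2) → ℂ) :
    ((Real.sqrt d ^ d : ℝ) : ℂ) * (∑ k, c k • a k).det = ∑ k, (c k) ^ d * (lam k : ℂ) := by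
  classical
  set D : (Fin d → Fin (d ^ 2)) → ℂ := fun r => (Matrix.of fun i j => a (r i) i j).det with hD
  set P : (Fin d → Fin (d ^ 2)) → ℂ := fun r => ∏ i, c (r i) with hP
  have hdet : (∑ k, c k • a k).det = ∑ r : Fin d → Fin (d ^ 2), P r * D r := by
    have : (∑ k, c k • a k).det
        = Matrix.detRowAlternating (fun i => ∑ k, c k • (a k i)) := by
      congr 1
      ext i j
      simp [Matrix.sum_apply]
    rw [this]
    have hms := (Matrix.detRowAlternating : AlternatingMap ℂ (Fin d → ℂ) ℂ (Fin d)).toMultilinearMap.map_sum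
      (g := fun i k => c k • a k i)
    erw [hms]
    refine Finset.sum_congr rfl fun r _ => ?_
    rw [MultilinearMap.map_smul_univ]
    rfl
  have hfac : (d.factorial : ℂ) ≠ 0 := by
    exact_mod_cast Nat.cast_ne_zero.mpr d.factorial_ne_zero
  have hperm : ∀ σ : Equiv.Perm (Fin d),
      ∑ r : Fin d → Fin (d ^ 2), P r * D (r ∘ σ) = ∑ r : Fin d → Fin (d ^ 2), P r * D r := by
    intro σ
    refine (Fintype.sum_equiv (Equiv.arrowCongr σ (Equiv.refl (Fin (d ^ 2)))) _ _ ?_).symm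
    intro r
    have h1 : (Equiv.arrowCongr σ (Equiv.refl (Fin (d ^ 2))) r) ∘ σ = r := by
      funext i; simp
    have h2 : P (Equiv.arrowCongr σ (Equiv.refl (Fin (d ^ 2))) r) = P r := by
      simp only [hP]
      exact Equiv.prod_comp σ.symm (fun i => c (r i))
    rw [h1, h2]
  have step1 : (d.factorial : ℂ) * ∑ r : Fin d → Fin (d ^ 2), P r * D r
      = ∑ r : Fin d → Fin (d ^ 2), P r * ∑ σ : Equiv.Perm (Fin d), D (r ∘ σ) := by
    simp_rw [Finset.mul_sum]
    rw [Finset.sum_comm]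
    simp_rw [hperm]
    rw [Finset.sum_const, Finset.card_univ, Fintype.card_perm, Fintype.card_fin,
      nsmul_eq_mul, Finset.mul_sum]
  have step2 : ∀ r : Fin d → Fin (d ^ 2),
      ((Real.sqrt d ^ d : ℝ) : ℂ) * ∑ σ : Equiv.Perm (Fin d), D (r ∘ σ)
        = (d.factorial : ℂ) * tauTensor d (d ^ 2) a r := by
    intro r
    rw [tauTensor]
    have : (∑ σ : Equiv.Perm (Fin d), (Matrix.of fun i j => a (r (σ i)) i j).det)
        = ∑ σ : Equiv.Perm (Fin d), D (r ∘ σ) := rfl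
    rw [this]
    push_cast
    field_simp
  have step3 : ∑ r : Fin d → Fin (d ^ 2), P r * tauTensor d (d ^ 2) a r
      = ∑ k, (c k) ^ d * (lam k : ℂ) := by
    have i0 : Fin d := ⟨0, hd⟩
    set g : Fin (d ^ 2) → (Fin d → Fin (d ^ 2)) := fun k _ => k with hg
    have hginj : Function.Injective g := by
      intro x y hxy
      exact congrFun hxy i0
    have hsub : (Finset.univ.image g) ⊆ Finset.univ := Finset.subset_univ _
    rw [← Finset.sum_subset hsub]
    · rw [Finset.sum_image (fun x _ y _ h => hginj h)]
      refine Finset.sum_congr rfl fun k _ => ?_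
      rw [hdiag k]
      congr 1
      simp [hP, hg, Finset.prod_const, Finset.card_univ]
    · intro r _ hr
      have : ∃ i j, r i ≠ r j := by
        by_contra hcon
        push_neg at hcon
        apply hr
        refine Finset.mem_image.mpr ⟨r i0, Finset.mem_univ _, ?_⟩
        funext i
        exact hcon i0 i
      rw [hoff r this, mul_zero]
  have final : (d.factorial : ℂ) * (((Real.sqrt d ^ d : ℝ) : ℂ) * (∑ k, c k • a k).det)
      = (d.factorial : ℂ) * ∑ k, (c k) ^ d * (lam k : ℂ) := by
    calc (d.factorial : ℂ) * (((Real.sqrt d ^ d : ℝ) : ℂ) * (∑ k, c k • a k).det)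
        = ((Real.sqrt d ^ d : ℝ) : ℂ) * ((d.factorial : ℂ) * ∑ r : Fin d → Fin (d ^ 2), P r * D r) := by
          rw [hdet]; ring
      _ = ((Real.sqrt d ^ d : ℝ) : ℂ) * ∑ r : Fin d → Fin (d ^ 2), P r * ∑ σ : Equiv.Perm (Fin d), D (r ∘ σ) := by
          rw [step1]
      _ = ∑ r : Fin d → Fin (d ^ 2), P r * (((Real.sqrt d ^ d : ℝ) : ℂ) * ∑ σ : Equiv.Perm (Fin d), D (r ∘ σ)) := by
          rw [Finset.mul_sum]; refine Finset.sum_congr rfl fun r _ => by ring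
      _ = ∑ r : Fin d → Fin (d ^ 2), P r * ((d.factorial : ℂ) * tauTensor d (d ^ 2) a r) := by
          refine Finset.sum_congr rfl fun r _ => by rw [step2 r]
      _ = (d.factorial : ℂ) * ∑ r : Fin d → Fin (d ^ 2), P r * tauTensor d (d ^ 2) a r := by
          rw [Finset.mul_sum]; refine Finset.sum_congr rfl fun r _ => by ring
      _ = (d.factorial : ℂ) * ∑ k, (c k) ^ d * (lam k : ℂ) := by rw [step3]
  exact mul_left_cancel₀ hfac final

lemma zsum (d : ℕ) (hd : 1 ≤ d) (j j' : Fin d) :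
    ∑ l : Fin d, (starRingEnd ℂ) (Complex.exp (2 * Real.pi * Complex.I / d) ^ ((l : ℕ) * (j : ℕ)))
        * Complex.exp (2 * Real.pi * Complex.I / d) ^ ((l : ℕ) * (j' : ℕ))
      = if j = j' then (d : ℂ) else 0 := by
  classical
  set ζ : ℂ := Complex.exp (2 * Real.pi * Complex.I / d) with hζ
  have hd0 : (d : ℕ) ≠ 0 := by omega
  have hprim : IsPrimitiveRoot ζ d := Complex.isPrimitiveRoot_exp d hd0
  have habs : ‖ζ‖ = 1 := by
    rw [hζ, Complex.norm_exp]
    have : (2 * Real.pi * Complex.I / d).re = 0 := by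
      simp [Complex.div_re]
    rw [this, Real.exp_zero]
  have hζ0 : ζ ≠ 0 := by
    intro h; rw [h] at habs; simp at habs
  have hconj : ∀ n : ℕ, (starRingEnd ℂ) (ζ ^ n) = ζ ^ (-(n : ℤ)) := by
    intro n
    rw [zpow_neg, zpow_natCast]
    exact (Complex.inv_eq_conj (by rw [norm_pow, habs, one_pow])).symm
  set m : ℤ := (j' : ℕ) - (j : ℕ) with hm
  set w : ℂ := ζ ^ m with hw
  have hterm : ∀ l : Fin d,
      (starRingEnd ℂ) (ζ ^ ((l : ℕ) * (j : ℕ))) * ζ ^ ((l : ℕ) * (j' : ℕ)) = w ^ (l : ℕ) := by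
    intro l
    rw [hconj, ← zpow_natCast ζ ((l : ℕ) * (j' : ℕ)), ← zpow_add₀ hζ0]
    rw [hw, ← zpow_natCast (ζ ^ m) (l : ℕ), ← zpow_mul]
    congr 1
    push_cast [hm]
    ring
  simp_rw [hterm]
  by_cases hjj : j = j'
  · subst hjj
    have hw1 : w = 1 := by rw [hw, hm]; simp
    simp [hw1]
  · have hmne : m ≠ 0 := by
      intro h
      apply hjj
      have : (j : ℕ) = (j' : ℕ) := by omega
      exact Fin.ext this
    have hwne : w ≠ 1 := by
      intro h
      have := (hprim.zpow_eq_one_iff_dvd m).mp h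
      have habs' : |m| < (d : ℤ) := by
        have h1 := j.isLt; have h2 := j'.isLt
        rw [hm, abs_lt]
        omega
      have := Int.eq_zero_of_abs_lt_dvd this habs'
      exact hmne this
    have hwd : w ^ d = 1 := by
      rw [hw, ← zpow_natCast (ζ ^ m) d, ← zpow_mul, mul_comm, zpow_mul, zpow_natCast,
        hprim.pow_eq_one, one_zpow]
    rw [Fin.sum_univ_eq_sum_range (fun l => w ^ l), geom_sum_eq hwne d, hwd]
    simp [hjj]

lemma exists_special_unitary (d : ℕ) (hd : 1 ≤ d) :
    ∃ U : Matrix (Fin (d ^ 2)) (Fin (d ^ 2)) ℂ,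
      U ∈ Matrix.unitaryGroup (Fin (d ^ 2)) ℂ ∧
      ∀ l k, U l k ^ d
        = (if k = (⟨0, pow_pos hd 2⟩ : Fin (d ^ 2)) then 1 else -1) * ((d : ℂ) ^ d)⁻¹ := by
  classical
  have hd0 : d ≠ 0 := by omega
  have hdC : (d : ℂ) ≠ 0 := Nat.cast_ne_zero.mpr hd0
  set ζ : ℂ := Complex.exp (2 * Real.pi * Complex.I / d) with hζ
  have hζd : ζ ^ d = 1 := (Complex.isPrimitiveRoot_exp d hd0).pow_eq_one
  set e : Fin (d ^ 2) ≃ Fin d × Fin d := (finCongr (pow_two d)).trans finProdFinEquiv.symm with he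
  set η : Fin (d ^ 2) → ℂ := fun k =>
    if k = (⟨0, pow_pos hd 2⟩ : Fin (d ^ 2)) then 1 else Complex.exp (Real.pi * Complex.I / d) with hη
  have hηconj : ∀ k, (starRingEnd ℂ) (η k) * η k = 1 := by
    intro k
    by_cases h : k = (⟨0, pow_pos hd 2⟩ : Fin (d ^ 2))
    · simp [hη, h]
    · have hk : η k = Complex.exp (Real.pi * Complex.I / d) := by simp [hη, h]
      rw [hk, ← Complex.exp_conj, ← Complex.exp_add]
      have : (starRingEnd ℂ) (Real.pi * Complex.I / d) + Real.pi * Complex.I / d = 0 := by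
        simp [map_div₀, Complex.conj_I]
        ring
      rw [this, Complex.exp_zero]
  have hηpow : ∀ k, η k ^ d = if k = (⟨0, pow_pos hd 2⟩ : Fin (d ^ 2)) then 1 else -1 := by
    intro k
    by_cases h : k = (⟨0, pow_pos hd 2⟩ : Fin (d ^ 2))
    · simp [hη, h]
    · have hk : η k = Complex.exp (Real.pi * Complex.I / d) := by simp [hη, h]
      rw [hk, if_neg h, ← Complex.exp_nat_mul]
      have : (d : ℂ) * (Real.pi * Complex.I / d) = Real.pi * Complex.I := by
        field_simp
      rw [this, Complex.exp_pi_mul_I]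
  set U : Matrix (Fin (d ^ 2)) (Fin (d ^ 2)) ℂ := Matrix.of fun l k =>
    (d : ℂ)⁻¹ * (ζ ^ ((e l).1.1 * (e k).1.1) * ζ ^ ((e l).2.1 * (e k).2.1)) * η k with hU
  refine ⟨U, ?_, ?_⟩
  · rw [Matrix.mem_unitaryGroup_iff']
    ext k k'
    rw [Matrix.mul_apply, Matrix.one_apply]
    have h1 : ∀ l, (star U) k l * U l k'
        = (starRingEnd ℂ) (η k) * η k' * ((d : ℂ)⁻¹ * (d : ℂ)⁻¹) *
          (((starRingEnd ℂ) (ζ ^ ((e l).1.1 * (e k).1.1)) * ζ ^ ((e l).1.1 * (e k').1.1)) *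
           ((starRingEnd ℂ) (ζ ^ ((e l).2.1 * (e k).2.1)) * ζ ^ ((e l).2.1 * (e k').2.1))) := by
      intro l
      rw [Matrix.star_apply]
      simp only [hU, Matrix.of_apply, RCLike.star_def, map_mul, map_inv₀, map_natCast]
      ring
    simp_rw [h1]
    rw [← Finset.mul_sum]
    have h2 : ∑ l : Fin (d ^ 2),
        (((starRingEnd ℂ) (ζ ^ ((e l).1.1 * (e k).1.1)) * ζ ^ ((e l).1.1 * (e k').1.1)) *
         ((starRingEnd ℂ) (ζ ^ ((e l).2.1 * (e k).2.1)) * ζ ^ ((e l).2.1 * (e k').2.1)))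
        = (if (e k).1 = (e k').1 then (d : ℂ) else 0) *
          (if (e k).2 = (e k').2 then (d : ℂ) else 0) := by
      rw [← Equiv.sum_comp e.symm]
      simp only [Equiv.apply_symm_apply]
      rw [Fintype.sum_prod_type, ← zsum d hd (e k).1 (e k').1, ← zsum d hd (e k).2 (e k').2,
        Finset.sum_mul_sum]
    rw [h2]
    by_cases hkk : k = k'
    · subst hkk
      simp only [if_pos rfl]
      rw [hηconj k]
      field_simp
      simp
    · rw [if_neg hkk]
      have : (e k).1 ≠ (e k').1 ∨ (e k).2 ≠ (e k').2 := by
        by_contra hcon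
        push_neg at hcon
        exact hkk (e.injective (Prod.ext hcon.1 hcon.2))
      rcases this with h | h
      · rw [if_neg h]; ring
      · rw [if_neg h]; ring
  · intro l k
    simp only [hU, Matrix.of_apply]
    rw [mul_pow, mul_pow, mul_pow, hηpow k, pow_right_comm, hζd, one_pow,
      pow_right_comm ζ _ d, hζd, one_pow, inv_pow]
    ring

section Helpers

lemma hpow_rpow (d : ℕ) (hd : 1 ≤ d) (x : ℝ) (hx : 0 ≤ x) :
    (x ^ d) ^ ((2 : ℝ) / d) = x ^ 2 := by
  have hd0 : (d : ℝ) ≠ 0 := Nat.cast_ne_zero.mpr (by omega)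
  rw [← Real.rpow_natCast_mul hx d ((2 : ℝ) / d)]
  have h2 : (d : ℝ) * ((2 : ℝ) / d) = 2 := by field_simp
  rw [h2, show (2 : ℝ) = ((2 : ℕ) : ℝ) by norm_num, Real.rpow_natCast]

lemma rpow_add_le (x y p : ℝ) (hx : 0 ≤ x) (hy : 0 ≤ y) (hp0 : 0 ≤ p) (hp1 : p ≤ 1) :
    (x + y) ^ p ≤ x ^ p + y ^ p := by
  lift x to NNReal using hx
  lift y to NNReal using hy
  have := NNReal.rpow_add_le_add_rpow x y hp0 hp1
  exact_mod_cast this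

lemma rpow_sum_le {ι : Type*} (s : Finset ι) (f : ι → ℝ) (p : ℝ)
    (hf : ∀ i ∈ s, 0 ≤ f i) (hp0 : 0 < p) (hp1 : p ≤ 1) :
    (∑ i ∈ s, f i) ^ p ≤ ∑ i ∈ s, f i ^ p := by
  classical
  induction s using Finset.cons_induction with
  | empty => simp [Real.zero_rpow (ne_of_gt hp0)]
  | cons a s ha ih =>
    rw [Finset.sum_cons, Finset.sum_cons]
    have hfs : 0 ≤ ∑ i ∈ s, f i :=
      Finset.sum_nonneg fun i hi => hf i (Finset.mem_cons_of_mem hi)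
    calc (f a + ∑ i ∈ s, f i) ^ p ≤ f a ^ p + (∑ i ∈ s, f i) ^ p :=
          rpow_add_le _ _ _ (hf a (Finset.mem_cons_self a s)) hfs hp0.le hp1
      _ ≤ f a ^ p + ∑ i ∈ s, f i ^ p := by
          have := ih (fun i hi => hf i (Finset.mem_cons_of_mem hi))
          linarith

lemma unitary_col {n : ℕ} (V : Matrix (Fin n) (Fin n) ℂ)
    (hV : V ∈ Matrix.unitaryGroup (Fin n) ℂ) (k : Fin n) :
    ∑ l, ‖V l k‖ ^ 2 = 1 := by
  have h := Matrix.mem_unitaryGroup_iff'.mp hV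
  have h2 := congrFun (congrFun h k) k
  rw [Matrix.mul_apply, Matrix.one_apply_eq] at h2
  have hterm : ∀ l, (star V) k l * V l k = ((‖V l k‖ ^ 2 : ℝ) : ℂ) := by
    intro l
    rw [Matrix.star_apply, RCLike.star_def, mul_comm, Complex.mul_conj, ← Complex.sq_norm]
  simp_rw [hterm] at h2
  exact_mod_cast h2

end Helpers

lemma keyAbs (d : ℕ) (hd : 1 ≤ d)
    (a : Fin (d ^ 2) → Matrix (Fin d) (Fin d) ℂ) (lam : Fin (d ^ 2) → ℝ)
    (hdiag : ∀ c, tauTensor d (d ^ 2) a (fun _ => c) = (lam c : ℂ))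
    (hoff : ∀ k : Fin d → Fin (d ^ 2), (∃ i j, k i ≠ k j) → tauTensor d (d ^ 2) a k = 0)
    (c : Fin (d ^ 2) → ℂ) :
    (d : ℝ) * ‖(∑ k, c k • a k).det‖ ^ ((2 : ℝ) / d)
      = ‖∑ k, (c k) ^ d * (lam k : ℂ)‖ ^ ((2 : ℝ) / d) := by
  have hkey := keyDet d hd a lam hdiag hoff c
  have hs : Real.sqrt d ^ d * ‖(∑ k, c k • a k).det‖
      = ‖∑ k, (c k) ^ d * (lam k : ℂ)‖ := by
    rw [← hkey, norm_mul, Complex.norm_real, Real.norm_eq_abs,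
      abs_of_nonneg (pow_nonneg (Real.sqrt_nonneg _) _)]
  rw [← hs, Real.mul_rpow (pow_nonneg (Real.sqrt_nonneg _) _) (norm_nonneg _),
    hpow_rpow d hd _ (Real.sqrt_nonneg _), Real.sq_sqrt (Nat.cast_nonneg d)]

lemma sumEval (d : ℕ) (hd : 1 ≤ d)
    (U : Matrix (Fin (d ^ 2)) (Fin (d ^ 2)) ℂ)
    (hUpow : ∀ l k, U l k ^ d
      = (if k = (⟨0, pow_pos hd 2⟩ : Fin (d ^ 2)) then 1 else -1) * ((d : ℂ) ^ d)⁻¹)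
    (mu : Fin (d ^ 2) → ℝ) :
    ∑ l, ‖∑ k, (U l k) ^ d * (mu k : ℂ)‖ ^ ((2 : ℝ) / d)
      = |mu ⟨0, pow_pos hd 2⟩
            - ∑ k ∈ Finset.univ.erase (⟨0, pow_pos hd 2⟩ : Fin (d ^ 2)), mu k|
          ^ ((2 : ℝ) / d) := by
  classical
  have hd0 : (d : ℝ) ≠ 0 := Nat.cast_ne_zero.mpr (by omega)
  set i0 : Fin (d ^ 2) := ⟨0, pow_pos hd 2⟩ with hi0
  set T : ℝ := mu i0 - ∑ k ∈ Finset.univ.erase i0, mu k with hT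
  have hsl : ∀ l, (∑ k, (U l k) ^ d * (mu k : ℂ)) = ((d : ℂ) ^ d)⁻¹ * (T : ℂ) := by
    intro l
    have h1 : ∀ k, (U l k) ^ d * (mu k : ℂ)
        = ((d : ℂ) ^ d)⁻¹ * ((if k = i0 then 1 else -1) * (mu k : ℂ)) := by
      intro k; rw [hUpow l k]; ring
    simp_rw [h1]
    rw [← Finset.mul_sum]
    congr 1
    rw [← Finset.add_sum_erase _ _ (Finset.mem_univ i0), if_pos rfl, one_mul]
    have h2 : ∑ k ∈ Finset.univ.erase i0, (if k = i0 then (1:ℂ) else -1) * (mu k : ℂ)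
        = -∑ k ∈ Finset.univ.erase i0, (mu k : ℂ) := by
      rw [← Finset.sum_neg_distrib]
      refine Finset.sum_congr rfl fun k hk => ?_
      rw [if_neg (Finset.mem_erase.mp hk).1]
      ring
    rw [h2, hT]
    push_cast
    ring
  have habs : ∀ l, ‖∑ k, (U l k) ^ d * (mu k : ℂ)‖
      = (((d : ℝ) ^ d)⁻¹) * |T| := by
    intro l
    rw [hsl l, norm_mul, norm_inv, norm_pow, Complex.norm_natCast, Complex.norm_real, Real.norm_eq_abs]
  simp_rw [habs]
  rw [Real.mul_rpow (inv_nonneg.mpr (pow_nonneg (Nat.cast_nonneg d) _)) (abs_nonneg _)]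
  rw [Real.inv_rpow (pow_nonneg (Nat.cast_nonneg d) _), hpow_rpow d hd _ (Nat.cast_nonneg d)]
  rw [Finset.sum_const, Finset.card_univ, Fintype.card_fin, nsmul_eq_mul]
  have : ((d ^ 2 : ℕ) : ℝ) * (((d : ℝ) ^ 2)⁻¹ * |T| ^ ((2 : ℝ) / d))
      = |T| ^ ((2 : ℝ) / d) := by
    push_cast
    field_simp
  rw [← mul_assoc] at this ⊢
  rw [this]

/-- **Theorem 7 (generalized Wootters formula).** (1) For any nonnegative reals
`μ₁, …, μ_{d²}` there is a `d² × d²` unitary `U` with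
`∑_l |∑_k (U_{lk})^d μ_k|^{2/d} = |μ₁ − ∑_{k≥2} μ_k|^{2/d}`.
(2) Consequently, if the τ-tensor of `a⁽¹⁾, …, a⁽ᵈ²⁾` is diagonal with nonnegative entries
`λ₁ ≥ λ₂ ≥ … ` satisfying `λ₁ > ∑_{k≥2} λ_k`, then every decomposition
`b⁽ˡ⁾ = ∑_k V_{lk} a⁽ᵏ⁾` has total G-concurrence at least
`λ₁^{2/d} − ∑_{k≥2} λ_k^{2/d}`, and some unitary `U` realizes the upper bound
`(λ₁ − ∑_{k≥2} λ_k)^{2/d}` exactly; these bound the convex-roof G-concurrence. -/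
theorem gConcurrence_bounds
    (d : ℕ) (hd : 1 ≤ d)
    (a : Fin (d ^ 2) → Matrix (Fin d) (Fin d) ℂ) (lam : Fin (d ^ 2) → ℝ)
    (hlam : ∀ k, 0 ≤ lam k) (hsorted : Antitone lam)
    (hdiag : ∀ c, tauTensor d (d ^ 2) a (fun _ => c) = (lam c : ℂ))
    (hoff : ∀ k : Fin d → Fin (d ^ 2), (∃ i j, k i ≠ k j) → tauTensor d (d ^ 2) a k = 0)
    (hgt : ∑ k ∈ Finset.univ.erase (⟨0, pow_pos hd 2⟩ : Fin (d ^ 2)), lam k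
            < lam ⟨0, pow_pos hd 2⟩) :
    (∀ mu : Fin (d ^ 2) → ℝ, (∀ k, 0 ≤ mu k) →
      ∃ U : Matrix (Fin (d ^ 2)) (Fin (d ^ 2)) ℂ,
        U ∈ Matrix.unitaryGroup (Fin (d ^ 2)) ℂ ∧
        ∑ l, ‖∑ k, (U l k) ^ d * (mu k : ℂ)‖ ^ ((2 : ℝ) / d)
          = |mu ⟨0, pow_pos hd 2⟩
                - ∑ k ∈ Finset.univ.erase (⟨0, pow_pos hd 2⟩ : Fin (d ^ 2)), mu k|
              ^ ((2 : ℝ) / d)) ∧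
    (∀ V ∈ Matrix.unitaryGroup (Fin (d ^ 2)) ℂ,
      lam ⟨0, pow_pos hd 2⟩ ^ ((2 : ℝ) / d)
          - ∑ k ∈ Finset.univ.erase (⟨0, pow_pos hd 2⟩ : Fin (d ^ 2)),
              lam k ^ ((2 : ℝ) / d)
        ≤ ∑ l, (d : ℝ) * ‖(∑ k, V l k • a k).det‖ ^ ((2 : ℝ) / d)) ∧
    (∃ U ∈ Matrix.unitaryGroup (Fin (d ^ 2)) ℂ,
      ∑ l, (d : ℝ) * ‖(∑ k, U l k • a k).det‖ ^ ((2 : ℝ) / d)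
        = (lam ⟨0, pow_pos hd 2⟩
            - ∑ k ∈ Finset.univ.erase (⟨0, pow_pos hd 2⟩ : Fin (d ^ 2)), lam k)
          ^ ((2 : ℝ) / d)) := by
  
  classical
  set i0 : Fin (d ^ 2) := ⟨0, pow_pos hd 2⟩ with hi0
  obtain ⟨U, hUmem, hUpow⟩ := exists_special_unitary d hd
  refine ⟨?_, ?_, ?_⟩
  · -- Part 1
    intro mu _
    exact ⟨U, hUmem, sumEval d hd U hUpow mu⟩
  · -- Part 2: lower bound
    intro V hV
    have hterm : ∀ l : Fin (d ^ 2),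
        (d : ℝ) * ‖(∑ k, V l k • a k).det‖ ^ ((2 : ℝ) / d)
          = ‖∑ k, (V l k) ^ d * (lam k : ℂ)‖ ^ ((2 : ℝ) / d) :=
      fun l => keyAbs d hd a lam hdiag hoff (fun k => V l k)
    rw [Finset.sum_congr rfl fun l _ => hterm l]
    set p : ℝ := (2 : ℝ) / d with hp
    have hp0 : 0 < p := by
      apply div_pos (by norm_num)
      exact_mod_cast Nat.pos_of_ne_zero (by omega)
    set s : Fin (d ^ 2) → ℝ := fun l => ‖∑ k, (V l k) ^ d * (lam k : ℂ)‖ with hs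
    have hs0 : ∀ l, 0 ≤ s l := fun l => norm_nonneg _
    have hcol := unitary_col V hV
    set B : Fin (d ^ 2) → ℝ :=
      fun l => ∑ k ∈ Finset.univ.erase i0, ‖V l k‖ ^ d * lam k with hB
    have hB0 : ∀ l, 0 ≤ B l := fun l => Finset.sum_nonneg fun k _ =>
      mul_nonneg (pow_nonneg (norm_nonneg _) _) (hlam k)
    have hA : ∀ l, ‖V l i0‖ ^ d * lam i0 ≤ s l + B l := by
      intro l
      have hsplit : (V l i0) ^ d * (lam i0 : ℂ)
          = (∑ k, (V l k) ^ d * (lam k : ℂ))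
            - ∑ k ∈ Finset.univ.erase i0, (V l k) ^ d * (lam k : ℂ) := by
        rw [eq_sub_iff_add_eq]
        exact Finset.add_sum_erase _ (fun k => (V l k) ^ d * (lam k : ℂ))
          (Finset.mem_univ i0)
      have h1 : ‖(V l i0) ^ d * (lam i0 : ℂ)‖
          = ‖V l i0‖ ^ d * lam i0 := by
        rw [norm_mul, norm_pow, Complex.norm_real, Real.norm_eq_abs, abs_of_nonneg (hlam i0)]
      rw [← h1, hsplit, sub_eq_add_neg]
      refine (norm_add_le _ _).trans ?_
      rw [norm_neg]
      have hsX : ‖∑ k, (V l k) ^ d * (lam k : ℂ)‖ = s l := rfl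
      rw [hsX]
      refine add_le_add_right ?_ (s l)
      refine (norm_sum_le _ _).trans ?_
      simp only [hB]
      refine Finset.sum_le_sum fun k _ => ?_
      rw [norm_mul, norm_pow, Complex.norm_real, Real.norm_eq_abs, abs_of_nonneg (hlam k)]
    have e1 : ∀ (z : ℂ) (t : ℝ), 0 ≤ t →
        (‖z‖ ^ d * t) ^ p = ‖z‖ ^ 2 * t ^ p := by
      intro z t ht
      rw [Real.mul_rpow (pow_nonneg (norm_nonneg _) _) ht, hp,
        hpow_rpow d hd _ (norm_nonneg _)]
    have key_l : ∀ l, ‖V l i0‖ ^ 2 * lam i0 ^ p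
        ≤ s l ^ p + ∑ k ∈ Finset.univ.erase i0, ‖V l k‖ ^ 2 * lam k ^ p := by
      intro l
      have hA0 : 0 ≤ ‖V l i0‖ ^ d * lam i0 :=
        mul_nonneg (pow_nonneg (norm_nonneg _) _) (hlam i0)
      rcases eq_or_lt_of_le hd with h1 | hd2
      · -- d = 1 : the erase set is empty
        have hempty : (Finset.univ.erase i0 : Finset (Fin (d ^ 2))) = ∅ := by
          refine Finset.eq_empty_iff_forall_notMem.mpr fun x hx => ?_
          obtain ⟨hne, -⟩ := Finset.mem_erase.mp hx
          apply hne
          apply Fin.ext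
          have hxlt := x.isLt
          have : d ^ 2 = 1 := by rw [← h1]; norm_num
          omega
        have hBl : B l = 0 := by simp [hB, hempty]
        have hAs : ‖V l i0‖ ^ d * lam i0 ≤ s l := by
          have := hA l; rw [hBl] at this; linarith
        have := Real.rpow_le_rpow hA0 hAs hp0.le
        rw [e1 _ _ (hlam i0)] at this
        rw [hempty, Finset.sum_empty]
        linarith
      · -- d ≥ 2 : p ≤ 1 and rpow is subadditive
        have hp1 : p ≤ 1 := by
          rw [hp, div_le_one (by exact_mod_cast Nat.pos_of_ne_zero (by omega))]
          exact_mod_cast hd2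
        have step1 : (‖V l i0‖ ^ d * lam i0) ^ p ≤ (s l + B l) ^ p :=
          Real.rpow_le_rpow hA0 (hA l) hp0.le
        have step2 : (s l + B l) ^ p ≤ s l ^ p + B l ^ p :=
          rpow_add_le _ _ _ (hs0 l) (hB0 l) hp0.le hp1
        have step3 : B l ^ p ≤ ∑ k ∈ Finset.univ.erase i0,
            (‖V l k‖ ^ d * lam k) ^ p := by
          rw [hB]
          exact rpow_sum_le _ _ _ (fun k _ =>
            mul_nonneg (pow_nonneg (norm_nonneg _) _) (hlam k)) hp0 hp1
        have step4 : ∑ k ∈ Finset.univ.erase i0, (‖V l k‖ ^ d * lam k) ^ p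
            = ∑ k ∈ Finset.univ.erase i0, ‖V l k‖ ^ 2 * lam k ^ p :=
          Finset.sum_congr rfl fun k _ => e1 _ _ (hlam k)
        have := e1 (V l i0) (lam i0) (hlam i0)
        linarith
    have hsum := Finset.sum_le_sum fun l (_ : l ∈ Finset.univ) => key_l l
    rw [Finset.sum_add_distrib] at hsum
    have hL : ∑ l, ‖V l i0‖ ^ 2 * lam i0 ^ p = lam i0 ^ p := by
      rw [← Finset.sum_mul, hcol i0, one_mul]
    have hR : ∑ l, ∑ k ∈ Finset.univ.erase i0, ‖V l k‖ ^ 2 * lam k ^ p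
        = ∑ k ∈ Finset.univ.erase i0, lam k ^ p := by
      rw [Finset.sum_comm]
      exact Finset.sum_congr rfl fun k _ => by rw [← Finset.sum_mul, hcol k, one_mul]
    rw [hL, hR] at hsum
    linarith
  · -- Part 3: upper bound attained
    refine ⟨U, hUmem, ?_⟩
    have hterm : ∀ l : Fin (d ^ 2),
        (d : ℝ) * ‖(∑ k, U l k • a k).det‖ ^ ((2 : ℝ) / d)
          = ‖∑ k, (U l k) ^ d * (lam k : ℂ)‖ ^ ((2 : ℝ) / d) :=
      fun l => keyAbs d hd a lam hdiag hoff (fun k => U l k)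
    rw [Finset.sum_congr rfl fun l _ => hterm l, sumEval d hd U hUpow lam,
      abs_of_pos (by linarith)]
end
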